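/- arXiv:1209.1074 — 12 statements merged into one kernel-verified Lean document; each statement's English description precedes it below -/
import Mathlib

section
/- Suppose a group G acts on a wallspace (X, W) (acting on X and on the index set compatibly) so that the underlying action on the metric space (X, d) is metrically proper (for each x ∈ X and r > 0 the set {g ∈ G : d(x, g·x) ≤ r} is finite) and by isometries, and suppose the Linear Separation Property holds: there exist constants κ > 0 and ε ≥ 0 such that #(x,y) ≥ κ·d(x,y) − ε for all x, y ∈ X, where #(x,y) denotes the number of walls separating x and y. Then for every x ∈ X and every n ∈ ℕ, the set {g ∈ G : #(x, g·x) ≤ n} is finite. (Since the distance in the dual cube complex between the canonical cubes of x and g·x equals #(x, g·x), this expresses that G acts metrically properly on the dual cube complex.) -/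
open Pointwise

/-- A wallspace on a set `X`: an indexed family of walls `W i = (U i, V i)` whose closed
halfspaces cover `X`, such that each point betwixts only finitely many walls, any two points
are separated by only finitely many walls, and there are no duplicate genuine partitions. -/
structure Wallspace (X : Type*) (ι : Type*) where
  U : ι → Set X
  V : ι → Set X
  cover : ∀ i, U i ∪ V i = Set.univ
  betwixt_finite : ∀ x : X, {i : ι | x ∈ U i ∩ V i}.Finite
  sep_finite : ∀ x y : X, {i : ι |
      (x ∈ U i \ V i ∧ y ∈ V i \ U i) ∨ (x ∈ V i \ U i ∧ y ∈ U i \ V i)}.Finite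
  no_dup_partition : ∀ i j, i ≠ j →
    ((U i = U j ∧ V i = V j) ∨ (U i = V j ∧ V i = U j)) →
    U i ∩ V i = ∅ → ¬((U i).Nonempty ∧ (V i).Nonempty)

namespace Wallspace

variable {X ι : Type*} (W : Wallspace X ι)

/-- The closed halfspace of wall `i` selected by `b` (`true ↦ U i`, `false ↦ V i`). -/
def side (i : ι) : Bool → Set X
  | true => W.U i
  | false => W.V i

/-- The open halfspace of wall `i` on the side `b`. -/
def openSide (i : ι) (b : Bool) : Set X :=
  W.side i b \ W.side i (!b)

/-- The wall `i` separates the points `x` and `y`: they lie in distinct open halfspaces. -/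
def Separates (i : ι) (x y : X) : Prop :=
  (x ∈ W.U i \ W.V i ∧ y ∈ W.V i \ W.U i) ∨
  (x ∈ W.V i \ W.U i ∧ y ∈ W.U i \ W.V i)

/-- A `0`-cube of the dual cube complex: an orientation `c` of the walls (where `c i` selects
the left halfspace `W.side i (c i)` of the wall `i`) such that any two left halfspaces meet
and every point lies in all but finitely many left halfspaces. -/
def IsZeroCube (c : ι → Bool) : Prop :=
  (∀ i j : ι, (W.side i (c i) ∩ W.side j (c j)).Nonempty) ∧
  (∀ x : X, {i : ι | x ∉ W.side i (c i)}.Finite)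

/-- Distinct walls `i ≠ j` are transverse if all four intersections of closed halfspaces
are nonempty. -/
def Transverse (i j : ι) : Prop :=
  i ≠ j ∧ (W.U i ∩ W.U j).Nonempty ∧ (W.U i ∩ W.V j).Nonempty ∧
    (W.V i ∩ W.U j).Nonempty ∧ (W.V i ∩ W.V j).Nonempty

/-- The wall `i` is reversible at the `0`-cube `c`: the orientation agreeing with `c` except
that the pair at `i` is swapped is again a `0`-cube. -/
def Reversible (c : ι → Bool) (i : ι) : Prop :=
  ∀ c' : ι → Bool, c' i = !(c i) → (∀ j, j ≠ i → c' j = c j) → W.IsZeroCube c'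

/-- The wall `i` crosses the subset `A` if `A` meets both closed halfspaces of `i`. -/
def Crosses (i : ι) (A : Set X) : Prop :=
  (A ∩ W.U i).Nonempty ∧ (A ∩ W.V i).Nonempty

/-- The wall `k` separates the walls `i` and `j`: some closed halfspace of `i` and some
closed halfspace of `j` lie in distinct open halfspaces of `k`. -/
def SeparatesWalls (k i j : ι) : Prop :=
  k ≠ i ∧ k ≠ j ∧ ∃ a bi bj : Bool,
    W.side i bi ⊆ W.openSide k a ∧ W.side j bj ⊆ W.openSide k (!a)

/-- Distinct walls `i`, `j` osculate if they are not transverse and no wall separates them. -/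
def Osculate (i j : ι) : Prop :=
  i ≠ j ∧ ¬ W.Transverse i j ∧ ∀ k : ι, ¬ W.SeparatesWalls k i j

/-- Two `0`-cubes are adjacent if they differ at exactly one wall index. -/
def Adjacent (c d : ι → Bool) : Prop :=
  W.IsZeroCube c ∧ W.IsZeroCube d ∧ ∃! i : ι, c i ≠ d i

end Wallspace

/-- A group `G` acts on the wallspace `W` if it acts on `X` and on the index set so that
the unordered pair of halfspaces of `g • i` is the `g`-translate of that of `i`. -/
def WallspaceAction (G : Type*) [Group G] {X ι : Type*} [MulAction G X] [MulAction G ι]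
    (W : Wallspace X ι) : Prop :=
  ∀ (g : G) (i : ι),
    (W.U (g • i) = g • W.U i ∧ W.V (g • i) = g • W.V i) ∨
    (W.U (g • i) = g • W.V i ∧ W.V (g • i) = g • W.U i)

/-- **Linear Separation implies metric properness of the dual action.**
If `G` acts on a wallspace `(X, W)`, the underlying action on the metric space `X` is by
isometries and metrically proper, and the Linear Separation Property holds
(`#(x,y) ≥ κ·d(x,y) − ε` with `κ > 0`, `ε ≥ 0`), then for every `x` and `n` the set of `g`
with `#(x, g·x) ≤ n` is finite; i.e. `G` acts metrically properly on the dual cube complex. -/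
theorem linear_separation_implies_metrically_proper
    {G X ι : Type*} [Group G] [MetricSpace X] [MulAction G X] [MulAction G ι]
    (W : Wallspace X ι) (hact : WallspaceAction G W)
    (hiso : ∀ (g : G) (x y : X), dist (g • x) (g • y) = dist x y)
    (hproper : ∀ (x : X) (r : ℝ), 0 < r → {g : G | dist x (g • x) ≤ r}.Finite)
    (κ ε : ℝ) (hκ : 0 < κ) (hε : 0 ≤ ε)
    (hls : ∀ x y : X, κ * dist x y - ε ≤ ({i : ι | W.Separates i x y}.ncard : ℝ)) :
    ∀ (x : X) (n : ℕ), {g : G | {i : ι | W.Separates i x (g • x)}.ncard ≤ n}.Finite := by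
  intro x n
  have hr : (0:ℝ) < (n + ε + 1) / κ := by positivity
  apply (hproper x _ hr).subset
  intro g hg
  simp only [Set.mem_setOf_eq] at hg ⊢
  have h1 := hls x (g • x)
  have h2 : ({i : ι | W.Separates i x (g • x)}.ncard : ℝ) ≤ n := by exact_mod_cast hg
  have : κ * dist x (g • x) ≤ n + ε := by linarith
  rw [div_eq_inv_mul, ← mul_le_mul_iff_right₀ hκ, ← mul_assoc, mul_inv_cancel₀ hκ.ne', one_mul]
  linarith
end

section
/- (Axis Separation) Let a group G act on a wallspace (X, W) (acting on X and on the index set compatibly). Let g ∈ G and let i₀ be a wall index with closed halfspaces U = U i₀ and V = V i₀ such that: (1) gⁿ·i₀ ≠ i₀ for every integer n ≠ 0; (2) U ∩ gⁿ·U ≠ ∅ for every integer n; (3) V ∩ gⁿ·V ≠ ∅ for every integer n. If there exists a 0-cube c of the dual cube complex with g·c = c, then for all integers k ≠ m the walls g^k·i₀ and g^m·i₀ are transverse; in particular (X, W) contains an infinite collection of pairwise transverse walls. -/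
open Pointwise

/-- **Axis Separation.** Suppose `G` acts on a wallspace `(X, W)`, `g ∈ G`, and `i₀` is a
wall index with halfspaces `U = U i₀`, `V = V i₀` such that `gⁿ·i₀ ≠ i₀` for `n ≠ 0`,
`U ∩ gⁿ·U ≠ ∅` and `V ∩ gⁿ·V ≠ ∅` for all `n : ℤ`.  If `g` fixes a `0`-cube `c` of the dual
cube complex, then the walls `g^k·i₀` (`k : ℤ`) are pairwise transverse; in particular the
wallspace contains an infinite collection of pairwise transverse walls. -/
theorem axis_separation
    {G X ι : Type*} [Group G] [MulAction G X] [MulAction G ι]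
    (W : Wallspace X ι) (hact : WallspaceAction G W)
    (g : G) (i₀ : ι)
    (h1 : ∀ n : ℤ, n ≠ 0 → (g ^ n) • i₀ ≠ i₀)
    (h2 : ∀ n : ℤ, (W.U i₀ ∩ (g ^ n) • W.U i₀).Nonempty)
    (h3 : ∀ n : ℤ, (W.V i₀ ∩ (g ^ n) • W.V i₀).Nonempty)
    (c : ι → Bool) (hc : W.IsZeroCube c)
    (hfix : ∀ i : ι, W.side (g • i) (c (g • i)) = g • W.side i (c i) ∧
      W.side (g • i) (!(c (g • i))) = g • W.side i (!(c i))) :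
    (∀ k m : ℤ, k ≠ m → W.Transverse ((g ^ k) • i₀) ((g ^ m) • i₀)) ∧
    ∃ T : Set ι, T.Infinite ∧ T.Pairwise W.Transverse := by
  -- injectivity of the orbit map
  have hinj : ∀ p q : ℤ, (g ^ p) • i₀ = (g ^ q) • i₀ → p = q := by
    intro p q h
    by_contra hne
    apply h1 (p - q) (sub_ne_zero.2 hne)
    have e1 : (g : G) ^ (p - q) = g ^ (-q) * g ^ p := by
      rw [← zpow_add]; ring_nf
    rw [e1, mul_smul, h, smul_smul, ← zpow_add]
    simp
  -- the chosen side is equivariant along the ⟨g⟩-orbit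
  have hstep : ∀ i : ι, W.side (g • i) (c (g • i)) = g • W.side i (c i) := fun i => (hfix i).1
  have hstep' : ∀ i : ι, W.side (g⁻¹ • i) (c (g⁻¹ • i)) = g⁻¹ • W.side i (c i) := by
    intro i
    have h := hstep (g⁻¹ • i)
    rw [smul_inv_smul] at h
    rw [h, inv_smul_smul]
  have hside : ∀ m : ℤ, W.side ((g ^ m) • i₀) (c ((g ^ m) • i₀))
      = (g ^ m) • W.side i₀ (c i₀) := by
    intro m
    induction m using Int.induction_on with
    | zero => simp
    | succ k ih =>
        have e2 : g * g ^ (k : ℤ) = g ^ ((k : ℤ) + 1) := by group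
        have e : (g ^ ((k : ℤ) + 1)) • i₀ = g • ((g ^ (k : ℤ)) • i₀) := by
          rw [smul_smul, e2]
        rw [e, hstep, ih, smul_smul, e2]
    | pred k ih =>
        have e2 : g⁻¹ * g ^ (-(k : ℤ)) = g ^ (-(k : ℤ) - 1) := by group
        have e : (g ^ (-(k : ℤ) - 1)) • i₀ = g⁻¹ • ((g ^ (-(k : ℤ))) • i₀) := by
          rw [smul_smul, e2]
        rw [e, hstep', ih, smul_smul, e2]
  have hzs : ∀ (a b : ℤ) (S : Set X), (g ^ (a + b)) • S = (g ^ a) • ((g ^ b) • S) := by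
    intro a b S; rw [smul_smul, ← zpow_add]
  have hcover : ∀ x : X, x ∈ W.U i₀ ∨ x ∈ W.V i₀ := by
    intro x
    have hx : x ∈ W.U i₀ ∪ W.V i₀ := by rw [W.cover i₀]; trivial
    exact hx
  obtain ⟨u₀, hu₀, -⟩ := h2 0
  obtain ⟨v₀, hv₀, -⟩ := h3 0
  -- the key mixed-intersection fact
  have hUV : ∀ n : ℤ, n ≠ 0 → (W.U i₀ ∩ (g ^ n) • W.V i₀).Nonempty := by
    intro n hn
    by_contra hemp
    rw [Set.not_nonempty_iff_eq_empty] at hemp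
    have hdisj : ∀ x : X, x ∈ W.U i₀ → x ∈ (g ^ n) • W.V i₀ → False := by
      intro x hx hx'
      have hmem : x ∈ W.U i₀ ∩ (g ^ n) • W.V i₀ := ⟨hx, hx'⟩
      rw [hemp] at hmem; exact hmem
    cases hb : c i₀ with
    | true =>
        -- chosen side is U; points of gⁿ•V lie outside all g^{-kn}•U
        have hS : W.side i₀ (c i₀) = W.U i₀ := by rw [hb]; rfl
        have hkey : ∀ y : X, y ∈ (g ^ (-n)) • W.U i₀ → y ∈ W.V i₀ → False := by
          rintro y ⟨u, hu, rfl⟩ hyV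
          refine hdisj u hu ⟨(g ^ (-n)) • u, hyV, ?_⟩
          show g ^ n • g ^ (-n) • u = u
          rw [smul_smul, ← zpow_add]; simp
        have hsub : ∀ y : X, y ∈ (g ^ (-n)) • W.U i₀ → y ∈ W.U i₀ := by
          intro y hy
          rcases hcover y with h | h
          · exact h
          · exact (hkey y hy h).elim
        have chain : ∀ k : ℕ, ∀ y : X, y ∈ (g ^ (-(k : ℤ) * n)) • W.U i₀ → y ∈ W.U i₀ := by
          intro k
          induction k with
          | zero => intro y hy; simpa using hy
          | succ k ih =>
              intro y hy
              push_cast at hy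
              have e : (-((k : ℤ) + 1)) * n = -n + (-(k : ℤ) * n) := by ring
              rw [e, hzs] at hy
              obtain ⟨z, hz, rfl⟩ := hy
              exact hsub _ ⟨z, ih z hz, rfl⟩
        set x : X := (g ^ n) • v₀ with hxdef
        have hvx : v₀ = (g ^ (-n)) • x := by
          rw [hxdef, smul_smul, ← zpow_add]; simp
        have claim : ∀ k : ℕ, x ∉ (g ^ (-(k : ℤ) * n)) • W.U i₀ := by
          intro k hx
          exact hkey v₀ ⟨x, chain k x hx, hvx.symm⟩ hv₀
        have hinf : {i : ι | x ∉ W.side i (c i)}.Infinite := by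
          apply Set.infinite_of_injective_forall_mem
            (f := fun k : ℕ => (g ^ (-(k : ℤ) * n)) • i₀)
          · intro a b hab
            have h' := hinj _ _ hab
            have h'' : -(a : ℤ) = -(b : ℤ) := mul_right_cancel₀ hn h'
            omega
          · intro k
            simp only [Set.mem_setOf_eq]
            rw [hside, hS]
            exact claim k
        exact hinf (hc.2 x)
    | false =>
        -- chosen side is V; points of g^{-n}•U lie outside all g^{kn}•V
        have hS : W.side i₀ (c i₀) = W.V i₀ := by rw [hb]; rfl
        have hkey : ∀ y : X, y ∈ (g ^ n) • W.V i₀ → y ∈ W.U i₀ → False := by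
          intro y hy hyU
          exact hdisj y hyU hy
        have hsub : ∀ y : X, y ∈ (g ^ n) • W.V i₀ → y ∈ W.V i₀ := by
          intro y hy
          rcases hcover y with h | h
          · exact (hkey y hy h).elim
          · exact h
        have chain : ∀ k : ℕ, ∀ y : X, y ∈ (g ^ ((k : ℤ) * n)) • W.V i₀ → y ∈ W.V i₀ := by
          intro k
          induction k with
          | zero => intro y hy; simpa using hy
          | succ k ih =>
              intro y hy
              push_cast at hy
              have e : ((k : ℤ) + 1) * n = n + ((k : ℤ) * n) := by ring
              rw [e, hzs] at hy
              obtain ⟨z, hz, rfl⟩ := hy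
              exact hsub _ ⟨z, ih z hz, rfl⟩
        set x : X := (g ^ (-n)) • u₀ with hxdef
        have hux : u₀ = (g ^ n) • x := by
          rw [hxdef, smul_smul, ← zpow_add]; simp
        have claim : ∀ k : ℕ, x ∉ (g ^ ((k : ℤ) * n)) • W.V i₀ := by
          intro k hx
          exact hkey u₀ ⟨x, chain k x hx, hux.symm⟩ hu₀
        have hinf : {i : ι | x ∉ W.side i (c i)}.Infinite := by
          apply Set.infinite_of_injective_forall_mem
            (f := fun k : ℕ => (g ^ ((k : ℤ) * n)) • i₀)
          · intro a b hab
            have h' := hinj _ _ hab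
            have h'' : (a : ℤ) = (b : ℤ) := mul_right_cancel₀ hn h'
            omega
          · intro k
            simp only [Set.mem_setOf_eq]
            rw [hside, hS]
            exact claim k
        exact hinf (hc.2 x)
  have hVU : ∀ n : ℤ, n ≠ 0 → (W.V i₀ ∩ (g ^ n) • W.U i₀).Nonempty := by
    intro n hn
    obtain ⟨y, hyU, hyV⟩ := hUV (-n) (neg_ne_zero.2 hn)
    refine ⟨(g ^ n) • y, ?_, Set.smul_mem_smul_set hyU⟩
    obtain ⟨v, hv, rfl⟩ := hyV
    rw [smul_smul, ← zpow_add]; simpa using hv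
  have hpair : ∀ (P Q : Set X) (k m : ℤ), (P ∩ (g ^ (m - k)) • Q).Nonempty →
      ((g ^ k) • P ∩ (g ^ m) • Q).Nonempty := by
    rintro P Q k m ⟨x, hxP, hxQ⟩
    refine ⟨(g ^ k) • x, Set.smul_mem_smul_set hxP, ?_⟩
    obtain ⟨q, hq, rfl⟩ := hxQ
    refine ⟨q, hq, ?_⟩
    rw [smul_smul, ← zpow_add]
    congr 2
    ring
  have htrans : ∀ k m : ℤ, k ≠ m → W.Transverse ((g ^ k) • i₀) ((g ^ m) • i₀) := by
    intro k m hkm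
    have hn0 : m - k ≠ 0 := sub_ne_zero.2 (Ne.symm hkm)
    have nUU := hpair (W.U i₀) (W.U i₀) k m (h2 (m - k))
    have nVV := hpair (W.V i₀) (W.V i₀) k m (h3 (m - k))
    have nUV := hpair (W.U i₀) (W.V i₀) k m (hUV (m - k) hn0)
    have nVU := hpair (W.V i₀) (W.U i₀) k m (hVU (m - k) hn0)
    have hne : (g ^ k) • i₀ ≠ (g ^ m) • i₀ := fun h => hkm (hinj k m h)
    rcases hact (g ^ k) i₀ with ⟨e1, e2⟩ | ⟨e1, e2⟩ <;>
      rcases hact (g ^ m) i₀ with ⟨f1, f2⟩ | ⟨f1, f2⟩ <;>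
      exact ⟨hne, by rw [e1, f1]; assumption, by rw [e1, f2]; assumption,
        by rw [e2, f1]; assumption, by rw [e2, f2]; assumption⟩
  refine ⟨htrans, Set.range (fun n : ℤ => (g ^ n) • i₀), ?_, ?_⟩
  · exact Set.infinite_range_of_injective (fun p q h => hinj p q h)
  · rintro _ ⟨p, rfl⟩ _ ⟨q, rfl⟩ hpq
    exact htrans p q (fun h => hpq (by rw [h]))
end

section
/- (Bounded packing implies finite dimension) Let G be a group with finite generating set S acting on a wallspace (X, W) (acting on X and on the index set compatibly) with only finitely many G-orbits of wall indices. Suppose there are only finitely many G-orbits of unordered pairs of transverse walls, and suppose that for each wall index i the stabilizer Stab_G(i) has bounded packing in G. Then there exists k such that every collection of pairwise transverse walls of (X, W) has cardinality at most k (equivalently, the wallspace has the k-Plane Intersection Property, so the dual cube complex is finite dimensional). -/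
open Pointwise

/-- `g` is a product of fewer than `D` elements of `S ∪ S⁻¹`. -/
def HasWordLengthLT {G : Type*} [Group G] (S : Set G) (g : G) (D : ℝ) : Prop :=
  ∃ l : List G, (∀ a ∈ l, a ∈ S ∨ a⁻¹ ∈ S) ∧ l.prod = g ∧ (l.length : ℝ) < D

/-- Subsets `A`, `B` of `G` are `D`-close with respect to the generating set `S`. -/
def DClose {G : Type*} [Group G] (S : Set G) (D : ℝ) (A B : Set G) : Prop :=
  ∃ a ∈ A, ∃ b ∈ B, HasWordLengthLT S (a⁻¹ * b) D

/-- `H` has bounded packing in `G` (with respect to the generating set `S`): for each `D > 0`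
there exists `k` such that every collection of pairwise `D`-close left cosets of `H` has
cardinality at most `k`. -/
def BoundedPacking {G : Type*} [Group G] (S : Set G) (H : Subgroup G) : Prop :=
  ∀ D : ℝ, 0 < D → ∃ k : ℕ, ∀ C : Set (Set G),
    (∀ A ∈ C, ∃ g : G, A = g • (H : Set G)) →
    C.Pairwise (DClose S D) → C.Finite ∧ C.ncard ≤ k

/-- The frontier of `A ⊆ G` with respect to the finite generating set `S`. -/
def frontierIn {G : Type*} [Group G] (S : Finset G) (A : Set G) : Set G :=
  {a : G | a ∈ A ∧ ∃ s : G, (s ∈ S ∨ s⁻¹ ∈ S) ∧ a * s ∉ A}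

/-- `A` is `H`-finite: `A ⊆ H · F` for some finite `F`. -/
def HSetFinite {G : Type*} [Group G] (H : Set G) (A : Set G) : Prop :=
  ∃ F : Finset G, A ⊆ H * (F : Set G)

/-- An `H`-wall `{U, V}` in `G`: the halfspaces cover `G`, the pair is `H`-invariant,
`U ∩ V` is `H`-finite, and `U` and `V` have `Ḧ`-finite frontiers, where
`Ḧ = {h ∈ H : hU = U ∧ hV = V}`. -/
structure IsHWall {G : Type*} [Group G] (S : Finset G) (H : Subgroup G)
    (U V : Set G) : Prop where
  cover : U ∪ V = Set.univ
  invar : ∀ h ∈ H, (h • U = U ∧ h • V = V) ∨ (h • U = V ∧ h • V = U)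
  inter_hfinite : HSetFinite (H : Set G) (U ∩ V)
  frontierU : HSetFinite {h : G | h ∈ H ∧ h • U = U ∧ h • V = V} (frontierIn S U)
  frontierV : HSetFinite {h : G | h ∈ H ∧ h • U = U ∧ h • V = V} (frontierIn S V)


private lemma exists_word_bp {G : Type*} [Group G] (s : Set G) (g : G)
    (hg : g ∈ Subgroup.closure s) :
    ∃ l : List G, (∀ x ∈ l, x ∈ s ∨ x⁻¹ ∈ s) ∧ l.prod = g := by
  induction hg using Subgroup.closure_induction with
  | mem x hx => exact ⟨[x], by simp [hx], by simp⟩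
  | one => exact ⟨[], by simp, by simp⟩
  | mul x y _ _ ihx ihy =>
      obtain ⟨l1, h1, p1⟩ := ihx
      obtain ⟨l2, h2, p2⟩ := ihy
      refine ⟨l1 ++ l2, ?_, by simp [p1, p2]⟩
      intro a ha
      rcases List.mem_append.1 ha with h | h
      exacts [h1 a h, h2 a h]
  | inv x _ ihx =>
      obtain ⟨l, h1, p1⟩ := ihx
      refine ⟨(l.reverse.map Inv.inv), ?_, ?_⟩
      · intro a ha
        obtain ⟨y, hy, rfl⟩ := List.mem_map.1 ha
        rcases h1 y (List.mem_reverse.1 hy) with h | h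
        · exact Or.inr (by simpa using h)
        · exact Or.inl h
      · rw [← p1, List.prod_inv_reverse]
        congr 1
        rw [List.map_reverse]

/-- **Bounded packing implies finite dimension.**  Let `G` with finite generating set `S`
act on a wallspace `(X, W)` with finitely many orbits of wall indices and finitely many
orbits of unordered pairs of transverse walls, and suppose each wall stabilizer has bounded
packing in `G`.  Then there is a uniform bound `k` on the cardinality of any collection of
pairwise transverse walls (the `k`-Plane Intersection Property). -/
theorem bounded_packing_implies_finite_dimension
    {G X ι : Type*} [Group G] [MulAction G X] [MulAction G ι]
    (S : Finset G) (hS : Subgroup.closure (S : Set G) = ⊤)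
    (W : Wallspace X ι) (hact : WallspaceAction G W)
    (horb : ∃ F : Finset ι, ∀ i : ι, ∃ g : G, ∃ j ∈ F, i = g • j)
    (htrans : ∃ P : Finset (ι × ι), ∀ i j : ι, W.Transverse i j →
      ∃ g : G, ∃ p ∈ P, (i = g • p.1 ∧ j = g • p.2) ∨ (i = g • p.2 ∧ j = g • p.1))
    (hbp : ∀ i : ι, BoundedPacking (S : Set G) (MulAction.stabilizer G i)) :
    ∃ k : ℕ, ∀ T : Set ι, T.Pairwise W.Transverse → T.Finite ∧ T.ncard ≤ k := by
  classical
  obtain ⟨F₀, hF⟩ := horb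
  obtain ⟨P, hP⟩ := htrans
  -- word lists for every group element
  have hword : ∀ g : G, ∃ l : List G,
      (∀ x ∈ l, x ∈ (S : Set G) ∨ x⁻¹ ∈ (S : Set G)) ∧ l.prod = g := fun g =>
    exists_word_bp _ g (by rw [hS]; trivial)
  choose wlist hwmem hwprod using hword
  -- choice of translating elements between orbit representatives
  have tauex : ∀ p f : ι, ∃ t : G, (∃ g : G, g • f = p) → t • f = p := by
    intro p f
    by_cases h : ∃ g : G, g • f = p
    · exact ⟨h.choose, fun _ => h.choose_spec⟩
    · exact ⟨1, fun hc => absurd hc h⟩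
  choose tau htau using tauex
  -- the finite set of comparison elements and the constant D
  set Q : Finset ι := P.image Prod.fst ∪ P.image Prod.snd with hQ
  set E : Finset G :=
    (Q ×ˢ Q ×ˢ F₀).image (fun q => (tau q.1 q.2.2)⁻¹ * tau q.2.1 q.2.2) with hEdef
  set N : ℕ := E.sup (fun e => (wlist e).length) with hN
  set D : ℝ := (N : ℝ) + 1 with hDdef
  have hD : (0 : ℝ) < D := by positivity
  have hE : ∀ e ∈ E, HasWordLengthLT (S : Set G) e D := by
    intro e he
    refine ⟨wlist e, hwmem e, hwprod e, ?_⟩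
    have hle : (wlist e).length ≤ N := Finset.le_sup (f := fun e => (wlist e).length) he
    have : ((wlist e).length : ℝ) ≤ (N : ℝ) := by exact_mod_cast hle
    linarith
  -- orbit representatives
  choose gel rep hrepF hrep using hF
  -- bounded packing constants
  have hk : ∀ f : ι, ∃ k : ℕ, ∀ C : Set (Set G),
      (∀ A ∈ C, ∃ g : G, A = g • ((MulAction.stabilizer G f : Subgroup G) : Set G)) →
      C.Pairwise (DClose (S : Set G) D) → C.Finite ∧ C.ncard ≤ k := fun f => hbp f D hD
  choose kfun hkfun using hk
  refine ⟨∑ f ∈ F₀, kfun f, ?_⟩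
  intro T hT
  set Tf : ι → Set ι := fun f => {i | i ∈ T ∧ rep i = f} with hTfdef
  have key : ∀ f, (Tf f).Finite ∧ (Tf f).ncard ≤ kfun f := by
    intro f
    set H : Subgroup G := MulAction.stabilizer G f with hH
    set φ : ι → Set G := fun i => gel i • (H : Set G) with hφ
    have hfix : ∀ i ∈ Tf f, gel i • f = i := by
      intro i hi
      have := hrep i
      rw [hi.2] at this
      exact this.symm
    have hinj : Set.InjOn φ (Tf f) := by
      intro i hi j hj hij
      have h1 : (gel i)⁻¹ * gel j ∈ H := by
        rw [hφ] at hij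
        exact (leftCoset_eq_iff (s := H)).1 hij
      have h2 : ((gel i)⁻¹ * gel j) • f = f := h1
      have : gel j • f = gel i • f := by
        conv_lhs => rw [show gel j = gel i * ((gel i)⁻¹ * gel j) by group]
        rw [mul_smul, h2]
      rw [← hfix i hi, ← hfix j hj, this]
    have hcosets : ∀ A ∈ φ '' Tf f, ∃ g : G, A = g • (H : Set G) := by
      rintro A ⟨i, _, rfl⟩
      exact ⟨gel i, rfl⟩
    have hpair : (φ '' Tf f).Pairwise (DClose (S : Set G) D) := by
      rintro A ⟨i, hi, rfl⟩ B ⟨j, hj, rfl⟩ hAB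
      have hij : i ≠ j := fun h => hAB (by rw [h])
      have htr := hT hi.1 hj.1 hij
      obtain ⟨g, p, hpP, hc⟩ := hP i j htr
      have hmain : ∃ p1 p2 : ι, p1 ∈ Q ∧ p2 ∈ Q ∧ i = g • p1 ∧ j = g • p2 := by
        rcases hc with ⟨h1, h2⟩ | ⟨h1, h2⟩
        · exact ⟨p.1, p.2, Finset.mem_union_left _ (Finset.mem_image_of_mem _ hpP),
            Finset.mem_union_right _ (Finset.mem_image_of_mem _ hpP), h1, h2⟩
        · exact ⟨p.2, p.1, Finset.mem_union_right _ (Finset.mem_image_of_mem _ hpP),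
            Finset.mem_union_left _ (Finset.mem_image_of_mem _ hpP), h1, h2⟩
      obtain ⟨p1, p2, hp1Q, hp2Q, hip, hjp⟩ := hmain
      have hex1 : ∃ g' : G, g' • f = p1 :=
        ⟨g⁻¹ * gel i, by rw [mul_smul, hfix i hi, hip, inv_smul_smul]⟩
      have hex2 : ∃ g' : G, g' • f = p2 :=
        ⟨g⁻¹ * gel j, by rw [mul_smul, hfix j hj, hjp, inv_smul_smul]⟩
      set a : G := g * tau p1 f with ha
      set b : G := g * tau p2 f with hb
      have haf : a • f = i := by rw [ha, mul_smul, htau p1 f hex1, ← hip]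
      have hbf : b • f = j := by rw [hb, mul_smul, htau p2 f hex2, ← hjp]
      have hmema : a ∈ φ i := by
        rw [hφ]
        refine (mem_leftCoset_iff _).2 ?_
        show ((gel i)⁻¹ * a) • f = f
        rw [mul_smul, haf, inv_smul_eq_iff]
        exact (hfix i hi).symm
      have hmemb : b ∈ φ j := by
        rw [hφ]
        refine (mem_leftCoset_iff _).2 ?_
        show ((gel j)⁻¹ * b) • f = f
        rw [mul_smul, hbf, inv_smul_eq_iff]
        exact (hfix j hj).symm
      refine ⟨a, hmema, b, hmemb, ?_⟩
      have hab : a⁻¹ * b = (tau p1 f)⁻¹ * tau p2 f := by rw [ha, hb]; group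
      rw [hab]
      apply hE
      refine Finset.mem_image.2 ⟨(p1, p2, f), ?_, rfl⟩
      have hfF : f ∈ F₀ := hi.2 ▸ hrepF i
      exact Finset.mem_product.2 ⟨hp1Q, Finset.mem_product.2 ⟨hp2Q, hfF⟩⟩
    obtain ⟨hCfin, hCcard⟩ := hkfun f (φ '' Tf f) hcosets hpair
    refine ⟨Set.Finite.of_finite_image hCfin hinj, ?_⟩
    rw [← Set.ncard_image_of_injOn hinj]
    exact hCcard
  have hsub : T ⊆ ⋃ f ∈ F₀, Tf f := fun i hi =>
    Set.mem_biUnion (hrepF i) ⟨hi, rfl⟩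
  have hTfin : T.Finite :=
    Set.Finite.subset (Set.Finite.biUnion F₀.finite_toSet (fun f _ => (key f).1)) hsub
  refine ⟨hTfin, ?_⟩
  rw [Set.ncard_eq_toFinset_card T hTfin]
  rw [Finset.card_eq_sum_card_fiberwise (f := rep) (t := F₀)
    (fun i _ => hrepF i)]
  refine Finset.sum_le_sum ?_
  intro f hf
  have hcoe : ((hTfin.toFinset.filter (fun i => rep i = f)) : Set ι) = Tf f := by
    ext i
    simp [hTfdef, Set.Finite.mem_toFinset, and_comm]
  calc (hTfin.toFinset.filter (fun i => rep i = f)).card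
      = (Tf f).ncard := by rw [← Set.ncard_coe_finset, hcoe]
    _ ≤ kfun f := (key f).2
end

section
/- (Bounded packing implies uniform local finiteness) Let G be a group with finite generating set S acting on a wallspace (X, W) (acting on X and on the index set compatibly) with only finitely many G-orbits of wall indices. Suppose there are only finitely many G-orbits of unordered pairs of transverse walls and only finitely many G-orbits of unordered pairs of osculating walls, and suppose that for each wall index i the stabilizer Stab_G(i) has bounded packing in G. Then the dual cube complex is uniformly locally finite: there exists N such that every 0-cube has at most N reversible walls. -/
open Pointwise

section Aux

variable {X ι : Type*}

lemma rev_side_meet (W : Wallspace X ι) {c : ι → Bool}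
    (hc : W.IsZeroCube c) {i : ι} (hi : W.Reversible c i) (b : Bool) {k : ι} (hk : k ≠ i) :
    (W.side i b ∩ W.side k (c k)).Nonempty := by
  classical
  by_cases hb : b = c i
  · rw [hb]; exact hc.1 i k
  · have hb' : b = !(c i) := by
      cases b <;> cases hcc : c i <;> simp_all
    have hzc : W.IsZeroCube (Function.update c i (!(c i))) :=
      hi _ (Function.update_self _ _ _) (fun j hj => Function.update_of_ne hj _ _)
    have h := hzc.1 i k
    rwa [Function.update_self, Function.update_of_ne hk, ← hb'] at h

lemma rev_not_sepWalls (W : Wallspace X ι) {c : ι → Bool}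
    (hc : W.IsZeroCube c) {i j : ι} (hi : W.Reversible c i) (hj : W.Reversible c j)
    (k : ι) : ¬ W.SeparatesWalls k i j := by
  rintro ⟨hki, hkj, a, bi, bj, h1, h2⟩
  by_cases hca : c k = a
  · obtain ⟨x, hx1, hx2⟩ := rev_side_meet W hc hj bj hkj
    have h3 := h2 hx1
    simp only [Wallspace.openSide, Set.mem_diff, Bool.not_not] at h3
    rw [hca] at hx2
    exact h3.2 hx2
  · have hca' : c k = !a := by cases hcc : c k <;> cases a <;> simp_all
    obtain ⟨x, hx1, hx2⟩ := rev_side_meet W hc hi bi hki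
    have h3 := h1 hx1
    simp only [Wallspace.openSide, Set.mem_diff] at h3
    rw [hca'] at hx2
    exact h3.2 hx2

lemma ncard_biUnion_le' {α β : Type*} (F : Finset α) (A : α → Set β) :
    (⋃ j ∈ F, A j).ncard ≤ ∑ j ∈ F, (A j).ncard := by
  classical
  induction F using Finset.induction with
  | empty => simp
  | @insert a s hx ih =>
    rw [Finset.set_biUnion_insert, Finset.sum_insert hx]
    exact le_trans (Set.ncard_union_le _ _) (by omega)

end Aux

/-- **Bounded packing implies uniform local finiteness.**  Let `G` with finite generating
set `S` act on a wallspace `(X, W)` with finitely many orbits of wall indices, finitely many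
orbits of unordered pairs of transverse walls and of unordered pairs of osculating walls,
and suppose each wall stabilizer has bounded packing in `G`.  Then the dual cube complex is
uniformly locally finite: there exists `N` bounding the number of reversible walls at
every `0`-cube. -/
theorem bounded_packing_implies_uniformly_locally_finite
    {G X ι : Type*} [Group G] [MulAction G X] [MulAction G ι]
    (S : Finset G) (hS : Subgroup.closure (S : Set G) = ⊤)
    (W : Wallspace X ι) (hact : WallspaceAction G W)
    (horb : ∃ F : Finset ι, ∀ i : ι, ∃ g : G, ∃ j ∈ F, i = g • j)
    (htrans : ∃ P : Finset (ι × ι), ∀ i j : ι, W.Transverse i j →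
      ∃ g : G, ∃ p ∈ P, (i = g • p.1 ∧ j = g • p.2) ∨ (i = g • p.2 ∧ j = g • p.1))
    (hosc : ∃ Q : Finset (ι × ι), ∀ i j : ι, W.Osculate i j →
      ∃ g : G, ∃ p ∈ Q, (i = g • p.1 ∧ j = g • p.2) ∨ (i = g • p.2 ∧ j = g • p.1))
    (hbp : ∀ i : ι, BoundedPacking (S : Set G) (MulAction.stabilizer G i)) :
    ∃ N : ℕ, ∀ c : ι → Bool, W.IsZeroCube c →
      {i : ι | W.Reversible c i}.Finite ∧ {i : ι | W.Reversible c i}.ncard ≤ N := by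
  classical
  obtain ⟨F, hF⟩ := horb
  obtain ⟨P, hP⟩ := htrans
  obtain ⟨Q, hQ⟩ := hosc
  -- word lengths
  have hw : ∀ g : G, ∃ l : List G,
      (∀ y ∈ l, y ∈ (S : Set G) ∨ y⁻¹ ∈ (S : Set G)) ∧ l.prod = g := by
    intro g
    have hg : g ∈ Submonoid.closure ((S : Set G) ∪ (S : Set G)⁻¹) := by
      rw [← Subgroup.closure_toSubmonoid, hS]; trivial
    obtain ⟨l, hl1, hl2⟩ := Submonoid.exists_list_of_mem_closure hg
    exact ⟨l, fun y hy => by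
      rcases hl1 y hy with h | h
      · exact Or.inl h
      · exact Or.inr (by simpa using h), hl2⟩
  choose w hw1 hw2 using hw
  -- per-orbit bound
  have hper : ∀ j : ι, ∃ k : ℕ, ∀ c : ι → Bool, W.IsZeroCube c →
      {i : ι | W.Reversible c i ∧ ∃ g : G, i = g • j}.Finite ∧
      {i : ι | W.Reversible c i ∧ ∃ g : G, i = g • j}.ncard ≤ k := by
    intro j
    set f : ι → G := fun a => if h : ∃ t : G, t • j = a then h.choose else 1 with hf
    have hfspec : ∀ a : ι, (∃ t : G, t • j = a) → f a • j = a := by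
      intro a h
      simp only [hf, dif_pos h]
      exact h.choose_spec
    set M : ℕ := (P ∪ Q).sup
      (fun p => max (w ((f p.1)⁻¹ * f p.2)).length (w ((f p.2)⁻¹ * f p.1)).length) with hM
    set D : ℝ := (M : ℝ) + 1 with hD
    have hDpos : 0 < D := by positivity
    obtain ⟨k, hk⟩ := hbp j D hDpos
    refine ⟨k, fun c hc => ?_⟩
    set Rj : Set ι := {i : ι | W.Reversible c i ∧ ∃ g : G, i = g • j} with hRj
    set φ : ι → Set G := fun i => {g : G | g • j = i} with hφ
    have hφcoset : ∀ i : ι, ∀ g₀ : G, i = g₀ • j →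
        φ i = g₀ • (MulAction.stabilizer G j : Set G) := by
      intro i g₀ hg₀
      ext g
      rw [Set.mem_smul_set_iff_inv_smul_mem, smul_eq_mul, SetLike.mem_coe,
        MulAction.mem_stabilizer_iff, mul_smul, inv_smul_eq_iff]
      simp only [hφ, Set.mem_setOf_eq, hg₀]
    have hinj : Set.InjOn φ Rj := by
      intro i₁ h₁ i₂ h₂ heq
      obtain ⟨g, hg⟩ := h₁.2
      have hg1 : g ∈ φ i₁ := by simp [hφ, hg]
      rw [heq] at hg1
      simp only [hφ, Set.mem_setOf_eq] at hg1
      rw [hg, ← hg1]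
    set C : Set (Set G) := φ '' Rj with hC
    have hcosets : ∀ A ∈ C, ∃ g : G, A = g • (MulAction.stabilizer G j : Set G) := by
      rintro A ⟨i, hi, rfl⟩
      obtain ⟨g₀, hg₀⟩ := hi.2
      exact ⟨g₀, hφcoset i g₀ hg₀⟩
    have hpair : C.Pairwise (DClose (S : Set G) D) := by
      rintro A ⟨i₁, hi₁, rfl⟩ B ⟨i₂, hi₂, rfl⟩ hAB
      have hne : i₁ ≠ i₂ := fun h => hAB (by rw [h])
      have core : ∀ (u v : ι) (g : G), i₁ = g • u → i₂ = g • v →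
          (w ((f u)⁻¹ * f v)).length ≤ M → DClose (S : Set G) D (φ i₁) (φ i₂) := by
        intro u v g hu hv hlen
        obtain ⟨g₁, hg₁⟩ := hi₁.2
        obtain ⟨g₂, hg₂⟩ := hi₂.2
        have hu' : ∃ t : G, t • j = u := by
          refine ⟨g⁻¹ * g₁, ?_⟩
          rw [mul_smul, ← hg₁, hu, inv_smul_smul]
        have hv' : ∃ t : G, t • j = v := by
          refine ⟨g⁻¹ * g₂, ?_⟩
          rw [mul_smul, ← hg₂, hv, inv_smul_smul]
        refine ⟨g * f u, ?_, g * f v, ?_, ?_⟩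
        · simp only [hφ, Set.mem_setOf_eq, mul_smul, hfspec u hu', hu]
        · simp only [hφ, Set.mem_setOf_eq, mul_smul, hfspec v hv', hv]
        · refine ⟨w ((f u)⁻¹ * f v), hw1 _, ?_, ?_⟩
          · rw [hw2]; group
          · rw [hD]
            have : ((w ((f u)⁻¹ * f v)).length : ℝ) ≤ (M : ℝ) := by exact_mod_cast hlen
            linarith
      have hto : W.Transverse i₁ i₂ ∨ W.Osculate i₁ i₂ := by
        by_cases ht : W.Transverse i₁ i₂
        · exact Or.inl ht
        · exact Or.inr ⟨hne, ht, fun k' => rev_not_sepWalls W hc hi₁.1 hi₂.1 k'⟩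
      have hex : ∃ g : G, ∃ p ∈ P ∪ Q,
          (i₁ = g • p.1 ∧ i₂ = g • p.2) ∨ (i₁ = g • p.2 ∧ i₂ = g • p.1) := by
        rcases hto with ht | ho
        · obtain ⟨g, p, hp, hcase⟩ := hP i₁ i₂ ht
          exact ⟨g, p, Finset.mem_union_left _ hp, hcase⟩
        · obtain ⟨g, p, hp, hcase⟩ := hQ i₁ i₂ ho
          exact ⟨g, p, Finset.mem_union_right _ hp, hcase⟩
      obtain ⟨g, p, hp, hcase | hcase⟩ := hex
      · refine core p.1 p.2 g hcase.1 hcase.2 ?_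
        rw [hM]
        exact le_trans (le_max_left _ _) (Finset.le_sup
          (f := fun q => max (w ((f q.1)⁻¹ * f q.2)).length (w ((f q.2)⁻¹ * f q.1)).length) hp)
      · refine core p.2 p.1 g hcase.1 hcase.2 ?_
        rw [hM]
        exact le_trans (le_max_right _ _) (Finset.le_sup
          (f := fun q => max (w ((f q.1)⁻¹ * f q.2)).length (w ((f q.2)⁻¹ * f q.1)).length) hp)
    obtain ⟨hCfin, hCcard⟩ := hk C hcosets hpair
    have hRfin : Rj.Finite := Set.Finite.of_finite_image hCfin hinj
    have hcard : Rj.ncard = C.ncard := (Set.ncard_image_of_injOn hinj).symm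
    exact ⟨hRfin, hcard ▸ hCcard⟩
  choose K hK using hper
  refine ⟨∑ j ∈ F, K j, fun c hc => ?_⟩
  have hsub : {i : ι | W.Reversible c i} ⊆
      ⋃ j ∈ F, {i : ι | W.Reversible c i ∧ ∃ g : G, i = g • j} := by
    intro i hi
    obtain ⟨g, j, hj, hij⟩ := hF i
    exact Set.mem_biUnion hj ⟨hi, g, hij⟩
  have hufin : (⋃ j ∈ F, {i : ι | W.Reversible c i ∧ ∃ g : G, i = g • j}).Finite :=
    Set.Finite.biUnion F.finite_toSet (fun j hj => (hK j c hc).1)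
  have hfin : {i : ι | W.Reversible c i}.Finite := hufin.subset hsub
  refine ⟨hfin, le_trans (Set.ncard_le_ncard hsub hufin) ?_⟩
  exact le_trans (ncard_biUnion_le' F _) (Finset.sum_le_sum fun j hj => (hK j c hc).2)
end

section
/- Let G be a group with finite generating set S, and let H₁, …, H_r be finitely generated subgroups such that each H_i has bounded packing in G. Choose an H_i-wall {U_i, V_i} for each i, and consider the wallspace on G whose walls are the G-translates {gU_i, gV_i} (g ∈ G, 1 ≤ i ≤ r). Then there exists k such that every collection of pairwise transverse walls of this wallspace has cardinality at most k; that is, the dual CAT(0) cube complex is finite dimensional. -/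
open Pointwise

section Aux
variable {G : Type*} [Group G]

def GList (S : Finset G) (l : List G) : Prop := ∀ a ∈ l, a ∈ S ∨ a⁻¹ ∈ S

def wallK (S : Finset G) (A B : Set G) : Set G :=
  (A ∩ B) ∪ frontierIn S A ∪ frontierIn S B

lemma exists_word (T : Set G) (g : G) (hg : g ∈ Subgroup.closure T) :
    ∃ l : List G, (∀ a ∈ l, a ∈ T ∨ a⁻¹ ∈ T) ∧ l.prod = g := by
  let P : Subgroup G :=
  { carrier := {x : G | ∃ l : List G, (∀ a ∈ l, a ∈ T ∨ a⁻¹ ∈ T) ∧ l.prod = x}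
    one_mem' := ⟨[], by simp, List.prod_nil⟩
    mul_mem' := by
      rintro a b ⟨l₁, h₁, rfl⟩ ⟨l₂, h₂, rfl⟩
      exact ⟨l₁ ++ l₂, fun x hx => (List.mem_append.1 hx).elim (h₁ x) (h₂ x),
        List.prod_append⟩
    inv_mem' := by
      rintro a ⟨l, h, rfl⟩
      refine ⟨(l.map fun x => x⁻¹).reverse, ?_, (List.prod_inv_reverse l).symm⟩
      intro x hx
      rw [List.mem_reverse, List.mem_map] at hx
      obtain ⟨y, hy, rfl⟩ := hx
      rcases h y hy with h' | h'
      · exact Or.inr (by simpa using h')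
      · exact Or.inl h' }
  exact (Subgroup.closure_le P).2 (fun t ht => ⟨[t], by simp [ht], by simp⟩) hg

lemma glist_inv {S : Finset G} {l : List G} (h : GList S l) :
    GList S ((l.map fun x => x⁻¹).reverse) := by
  intro x hx
  rw [List.mem_reverse, List.mem_map] at hx
  obtain ⟨y, hy, rfl⟩ := hx
  rcases h y hy with h' | h'
  · exact Or.inr (by simpa using h')
  · exact Or.inl h'

lemma glist_append {S : Finset G} {l₁ l₂ : List G} (h₁ : GList S l₁) (h₂ : GList S l₂) :
    GList S (l₁ ++ l₂) := fun x hx => (List.mem_append.1 hx).elim (h₁ x) (h₂ x)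

lemma wallK_comm (S : Finset G) (A B : Set G) : wallK S A B = wallK S B A := by
  ext x
  simp only [wallK, Set.mem_union, Set.mem_inter_iff]
  tauto

lemma frontierIn_smul (S : Finset G) (g : G) (A : Set G) :
    frontierIn S (g • A) = g • frontierIn S A := by
  ext x
  simp only [frontierIn, Set.mem_smul_set_iff_inv_smul_mem, smul_eq_mul, Set.mem_setOf_eq,
    mul_assoc]

lemma wallK_smul (S : Finset G) (g : G) (A B : Set G) :
    wallK S (g • A) (g • B) = g • wallK S A B := by
  simp only [wallK, frontierIn_smul, Set.smul_set_union, Set.smul_set_inter]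

/-- Crossing lemma: a path from `B` to `A` meets the wall set. -/
lemma cross (S : Finset G) {A B : Set G} (cover : A ∪ B = Set.univ) :
    ∀ l : List G, GList S l → ∀ x : G, x ∈ B → x * l.prod ∈ A →
    ∃ l₁ l₂ : List G, l = l₁ ++ l₂ ∧ x * l₁.prod ∈ wallK S A B := by
  intro l
  induction l with
  | nil =>
    intro _ x hxB hxA
    refine ⟨[], [], rfl, ?_⟩
    rw [List.prod_nil, mul_one] at hxA ⊢
    exact Or.inl (Or.inl ⟨hxA, hxB⟩)
  | cons a t ih =>
    intro hg x hxB hxA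
    by_cases hxA' : x ∈ A
    · exact ⟨[], a :: t, rfl, by rw [List.prod_nil, mul_one]; exact Or.inl (Or.inl ⟨hxA', hxB⟩)⟩
    · by_cases hy : x * a ∈ A
      · by_cases hyB : x * a ∈ B
        · refine ⟨[a], t, rfl, ?_⟩
          rw [List.prod_cons, List.prod_nil, mul_one]
          exact Or.inl (Or.inl ⟨hy, hyB⟩)
        · refine ⟨[], a :: t, rfl, ?_⟩
          rw [List.prod_nil, mul_one]
          exact Or.inr ⟨hxB, a, hg a List.mem_cons_self, hyB⟩
      · have hyB : x * a ∈ B := by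
          have : x * a ∈ A ∪ B := cover ▸ Set.mem_univ _
          exact this.resolve_left hy
        obtain ⟨l₁, l₂, hsplit, hmem⟩ :=
          ih (fun b hb => hg b (List.mem_cons_of_mem _ hb)) (x * a) hyB
            (by rw [mul_assoc, ← List.prod_cons]; exact hxA)
        refine ⟨a :: l₁, l₂, by rw [hsplit, List.cons_append], ?_⟩
        rw [List.prod_cons, ← mul_assoc]
        exact hmem

/-- Crossing lemma, from `A` to `B`. -/
lemma cross' (S : Finset G) {A B : Set G} (cover : A ∪ B = Set.univ) 
    (l : List G) (hl : GList S l) (x : G) (hx : x ∈ A) (hx' : x * l.prod ∈ B) :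
    ∃ l₁ l₂ : List G, l = l₁ ++ l₂ ∧ x * l₁.prod ∈ wallK S A B := by
  obtain ⟨l₁, l₂, h1, h2⟩ := cross S (by rw [Set.union_comm]; exact cover) l hl x hx hx'
  exact ⟨l₁, l₂, h1, by rw [wallK_comm]; exact h2⟩



/-- Crossing a wall along a path that fellow-travels a coset of `closure T`. -/
lemma mid (S : Finset G) {A B : Set G} (cover : A ∪ B = Set.univ)
    (w : G → List G) (hwg : ∀ g, GList S (w g)) (hwp : ∀ g, (w g).prod = g)
    (T : Finset G) (L : ℕ) (hL : ∀ a : G, (a ∈ T ∨ a⁻¹ ∈ T) → (w a).length ≤ L) :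
    ∀ m : List G, (∀ a ∈ m, a ∈ T ∨ a⁻¹ ∈ T) → ∀ x : G, x ∈ A → x * m.prod ∈ B →
    ∃ (m₁ m₂ l₁ : List G), m = m₁ ++ m₂ ∧ GList S l₁ ∧ l₁.length ≤ L ∧
      x * m₁.prod * l₁.prod ∈ wallK S A B := by
  intro m
  induction m with
  | nil =>
    intro _ x hxA hxB
    refine ⟨[], [], [], rfl, by intro a ha; simp at ha, Nat.zero_le _, ?_⟩
    rw [List.prod_nil, mul_one, mul_one]
    rw [List.prod_nil, mul_one] at hxB
    exact Or.inl (Or.inl ⟨hxA, hxB⟩)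
  | cons a m ih =>
    intro hm x hxA hxB
    by_cases hy : x * a ∈ A
    · obtain ⟨m₁, m₂, l₁, h1, h2, h3, h4⟩ :=
        ih (fun b hb => hm b (List.mem_cons_of_mem _ hb)) (x * a) hy
          (by rw [mul_assoc, ← List.prod_cons]; exact hxB)
      refine ⟨a :: m₁, m₂, l₁, by rw [h1, List.cons_append], h2, h3, ?_⟩
      rw [List.prod_cons, ← mul_assoc]
      exact h4
    · have hyB : x * a ∈ B := by
        have : x * a ∈ A ∪ B := cover ▸ Set.mem_univ _
        exact this.resolve_left hy
      obtain ⟨l₁, l₂, h1, h2⟩ := cross' S cover (w a) (hwg a) x hxA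
        (by rw [hwp]; exact hyB)
      refine ⟨[], a :: m, l₁, rfl, fun b hb => hwg a b (h1 ▸ List.mem_append_left _ hb),
        ?_, ?_⟩
      · calc l₁.length ≤ l₁.length + l₂.length := Nat.le_add_right _ _
          _ = (w a).length := by rw [h1, List.length_append]
          _ ≤ L := hL a (hm a List.mem_cons_self)
      · rw [List.prod_nil, mul_one]
        exact h2

/-- The impossible configuration: each wall set lies in one open halfspace of the other,
the wall sets are disjoint, yet the walls are transverse. -/
lemma case3 (S : Finset G) {A B A' B' : Set G}
    (cover : A ∪ B = Set.univ) (cover' : A' ∪ B' = Set.univ)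
    (w : G → List G) (hwg : ∀ g, GList S (w g)) (hwp : ∀ g, (w g).prod = g)
    (hK : wallK S A B ⊆ A' \ B') (hK' : wallK S A' B' ⊆ A \ B)
    (hdisj : ∀ z, z ∈ wallK S A B → z ∈ wallK S A' B' → False)
    (hs : (B ∩ B').Nonempty) (hp : (A ∩ A').Nonempty) : False := by
  obtain ⟨s, hsB, hsB'⟩ := hs
  obtain ⟨p, hpA, hpA'⟩ := hp
  have hsA : s ∉ A := fun h => (hK (Or.inl (Or.inl ⟨h, hsB⟩))).2 hsB'
  have hsA' : s ∉ A' := fun h => (hK' (Or.inl (Or.inl ⟨h, hsB'⟩))).2 hsB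
  set l : List G := w (s⁻¹ * p) with hl
  have hprod : s * l.prod = p := by rw [hl, hwp, mul_inv_cancel_left]
  have hlg : GList S l := hwg _
  have claim : ∀ n : ℕ, ∀ l₁ l₂ : List G, l₁.length ≤ n → l = l₁ ++ l₂ →
      s * l₁.prod ∉ wallK S A B ∪ wallK S A' B' := by
    intro n
    induction n with
    | zero =>
      intro l₁ l₂ hlen hsplit
      rw [List.length_eq_zero_iff.1 (Nat.le_zero.1 hlen), List.prod_nil, mul_one]
      rintro (h | h)
      · exact hsA' (hK h).1
      · exact hsA (hK' h).1
    | succ n ihn =>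
      intro l₁ l₂ hlen hsplit hz
      have hl₁g : GList S l₁ := fun b hb => hlg b (hsplit ▸ List.mem_append_left _ hb)
      rcases hz with h | h
      · -- z ∈ wallK A B ⊆ A' \ B'; path from s ∈ B' to z ∈ A' crosses wallK A' B'
        obtain ⟨m₁, m₂, h1, h2⟩ := cross S cover' l₁ hl₁g s hsB' (hK h).1
        cases m₂ with
        | nil =>
          rw [List.append_nil] at h1
          exact hdisj _ (h1 ▸ h) (h1 ▸ h2)
        | cons b2 t2 =>
          have hm₁len : m₁.length ≤ n := by
            have := congrArg List.length h1
            rw [List.length_append, List.length_cons] at this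
            omega
          exact ihn m₁ (b2 :: t2 ++ l₂) hm₁len (by rw [hsplit, h1, List.append_assoc])
            (Or.inr h2)
      · obtain ⟨m₁, m₂, h1, h2⟩ := cross S cover l₁ hl₁g s hsB (hK' h).1
        cases m₂ with
        | nil =>
          rw [List.append_nil] at h1
          exact hdisj _ (h1 ▸ h2) (h1 ▸ h)
        | cons b2 t2 =>
          have hm₁len : m₁.length ≤ n := by
            have := congrArg List.length h1
            rw [List.length_append, List.length_cons] at this
            omega
          exact ihn m₁ (b2 :: t2 ++ l₂) hm₁len (by rw [hsplit, h1, List.append_assoc])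
            (Or.inl h2)
  obtain ⟨l₁, l₂, h1, h2⟩ := cross S cover l hlg s hsB (hprod ▸ hpA)
  exact claim l₁.length l₁ l₂ le_rfl h1 (Or.inl h2)

lemma list_prod_mem_closure (T : Finset G) :
    ∀ m : List G, (∀ a ∈ m, a ∈ T ∨ a⁻¹ ∈ T) → m.prod ∈ Subgroup.closure (T : Set G) := by
  intro m hm
  refine Subgroup.list_prod_mem _ (fun x hx => ?_)
  rcases hm x hx with h | h
  · exact Subgroup.subset_closure h
  · have : x⁻¹ ∈ Subgroup.closure (T : Set G) := Subgroup.subset_closure h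
    simpa using Subgroup.inv_mem _ this

/-- If the wall set of `(A',B')` meets both halfspaces of `(A,B)`, then a path
fellow-travelling the coset `g'H₂` crosses the wall set of `(A,B)`. -/
lemma case1 (S : Finset G) {A B A' B' : Set G}
    (cover : A ∪ B = Set.univ)
    (w : G → List G) (hwg : ∀ g, GList S (w g)) (hwp : ∀ g, (w g).prod = g)
    (H₂ : Subgroup G) (T : Finset G) (hT : Subgroup.closure (T : Set G) = H₂)
    (g' : G) (F₂ : Finset G) (c₂ L₂ : ℕ)
    (hc₂ : ∀ f ∈ F₂, (w f).length ≤ c₂ ∧ (w f⁻¹).length ≤ c₂)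
    (hL₂ : ∀ a : G, (a ∈ T ∨ a⁻¹ ∈ T) → (w a).length ≤ L₂)
    (hK' : wallK S A' B' ⊆ g' • ((H₂ : Set G) * (F₂ : Set G)))
    (u' v' : G) (hu : u' ∈ wallK S A' B') (huA : u' ∈ A)
    (hv : v' ∈ wallK S A' B') (hvB : v' ∈ B) :
    ∃ (h : G) (l : List G), h ∈ H₂ ∧ GList S l ∧ l.length ≤ 2 * c₂ + L₂ ∧
      g' * h * l.prod ∈ wallK S A B := by
  obtain ⟨y₁, hy₁, hy₁e⟩ := hK' hu
  obtain ⟨h₁, hh₁, f₁, hf₁, rfl⟩ := hy₁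
  obtain ⟨y₂, hy₂, hy₂e⟩ := hK' hv
  obtain ⟨h₂, hh₂, f₂, hf₂, rfl⟩ := hy₂
  simp only [smul_eq_mul] at hy₁e hy₂e
  by_cases hA1 : g' * h₁ ∈ A
  · by_cases hA2 : g' * h₂ ∈ A
    · -- cross along the word for f₂ from g'*h₂ to v'
      obtain ⟨l₁, l₂, h1, h2⟩ := cross' S cover (w f₂) (hwg f₂) (g' * h₂) hA2
        (by rw [hwp, mul_assoc, hy₂e]; exact hvB)
      refine ⟨h₂, l₁, hh₂, fun b hb => hwg f₂ b (h1 ▸ List.mem_append_left _ hb), ?_, h2⟩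
      calc l₁.length ≤ l₁.length + l₂.length := Nat.le_add_right _ _
        _ = (w f₂).length := by rw [h1, List.length_append]
        _ ≤ 2 * c₂ + L₂ := by have := (hc₂ f₂ hf₂).1; omega
    · have hB2 : g' * h₂ ∈ B :=
        (show g' * h₂ ∈ A ∪ B from cover ▸ Set.mem_univ _).resolve_left hA2
      obtain ⟨m, hm, hmp⟩ := exists_word (T : Set G) (h₁⁻¹ * h₂)
        (by rw [hT]; exact mul_mem (inv_mem hh₁) hh₂)
      have hm' : ∀ a ∈ m, a ∈ T ∨ a⁻¹ ∈ T := by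
        intro a ha; simpa using hm a ha
      obtain ⟨m₁, m₂, l₁, h1, h2, h3, h4⟩ := mid S cover w hwg hwp T L₂ hL₂ m hm'
        (g' * h₁) hA1 (by rw [hmp, mul_assoc, mul_inv_cancel_left]; exact hB2)
      refine ⟨h₁ * m₁.prod, l₁, ?_, h2, by omega, ?_⟩
      · have : m₁.prod ∈ Subgroup.closure (T : Set G) :=
          list_prod_mem_closure T m₁ (fun a ha => hm' a (h1 ▸ List.mem_append_left _ ha))
        exact mul_mem hh₁ (hT ▸ this)
      · rw [← mul_assoc]; exact h4
  · have hB1 : g' * h₁ ∈ B :=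
      (show g' * h₁ ∈ A ∪ B from cover ▸ Set.mem_univ _).resolve_left hA1
    obtain ⟨l₁, l₂, h1, h2⟩ := cross' S cover (w f₁⁻¹) (hwg _) u' huA
      (by rw [hwp, ← hy₁e, mul_assoc, mul_inv_cancel_right]; exact hB1)
    refine ⟨h₁, w f₁ ++ l₁, hh₁,
      glist_append (hwg f₁) (fun b hb => hwg f₁⁻¹ b (h1 ▸ List.mem_append_left _ hb)), ?_, ?_⟩
    · have e1 : (w f₁).length ≤ c₂ := (hc₂ f₁ hf₁).1
      have e2 : l₁.length ≤ (w f₁⁻¹).length := by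
        rw [h1, List.length_append]; omega
      have e3 : (w f₁⁻¹).length ≤ c₂ := (hc₂ f₁ hf₁).2
      rw [List.length_append]; omega
    · rw [List.prod_append, hwp, ← mul_assoc, mul_assoc g' h₁ f₁, hy₁e]
      exact h2

lemma dclose_of_list (S : Finset G) {D : ℝ} {A B : Set G} {a b : G} (ha : a ∈ A) (hb : b ∈ B)
    (l : List G) (hl : GList S l) (hp : l.prod = a⁻¹ * b) (hlen : (l.length : ℝ) < D) :
    DClose (S : Set G) D A B :=
  ⟨a, ha, b, hb, l, fun x hx => (hl x hx).imp Finset.mem_coe.mpr Finset.mem_coe.mpr, hp, hlen⟩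

lemma dclose_symm {S : Set G} {D : ℝ} {A B : Set G} (h : DClose S D A B) : DClose S D B A := by
  obtain ⟨a, ha, b, hb, l, hl, hp, hlen⟩ := h
  refine ⟨b, hb, a, ha, (l.map fun x => x⁻¹).reverse, ?_, ?_, by simpa using hlen⟩
  · intro x hx
    rw [List.mem_reverse, List.mem_map] at hx
    obtain ⟨y, hy, rfl⟩ := hx
    rcases hl y hy with h' | h'
    · exact Or.inr (by simpa using h')
    · exact Or.inl h'
  · rw [← List.prod_inv_reverse, hp]; simp [mul_inv_rev]

lemma mem_coset (g h : G) (H : Subgroup G) (hh : h ∈ H) : g * h ∈ g • (H : Set G) :=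
  ⟨h, hh, rfl⟩

/-- Walls crossing case 1: wall set of `(A',B')` meets both halfspaces of `(A,B)`. -/
lemma case1_dclose (S : Finset G) {A B A' B' : Set G}
    (cover : A ∪ B = Set.univ)
    (w : G → List G) (hwg : ∀ g, GList S (w g)) (hwp : ∀ g, (w g).prod = g)
    (H₁ H₂ : Subgroup G) (T₂ : Finset G)
    (hT₂ : Subgroup.closure (T₂ : Set G) = H₂)
    (g g' : G) (F₁ F₂ : Finset G) (c₁ c₂ L₂ : ℕ)
    (hc₁ : ∀ f ∈ F₁, (w f).length ≤ c₁ ∧ (w f⁻¹).length ≤ c₁)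
    (hc₂ : ∀ f ∈ F₂, (w f).length ≤ c₂ ∧ (w f⁻¹).length ≤ c₂)
    (hL₂ : ∀ a : G, (a ∈ T₂ ∨ a⁻¹ ∈ T₂) → (w a).length ≤ L₂)
    (hK : wallK S A B ⊆ g • ((H₁ : Set G) * (F₁ : Set G)))
    (hK' : wallK S A' B' ⊆ g' • ((H₂ : Set G) * (F₂ : Set G)))
    (u' v' : G) (hu : u' ∈ wallK S A' B') (huA : u' ∈ A)
    (hv : v' ∈ wallK S A' B') (hvB : v' ∈ B)
    (N : ℕ) (hN : 2 * c₂ + L₂ + c₁ < N) :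
    DClose (S : Set G) (N : ℝ) (g' • (H₂ : Set G)) (g • (H₁ : Set G)) := by
  obtain ⟨h, l, hh, hlg, hlen, hmem⟩ := case1 S cover w hwg hwp H₂ T₂ hT₂ g' F₂ c₂ L₂
    hc₂ hL₂ hK' u' v' hu huA hv hvB
  obtain ⟨y, hy, hye⟩ := hK hmem
  obtain ⟨h₁, hh₁, f₁, hf₁, rfl⟩ := hy
  simp only [smul_eq_mul] at hye
  -- g * (h₁ * f₁) = g' * h * l.prod, so (g'*h)⁻¹ * (g*h₁) = l.prod * f₁⁻¹
  refine dclose_of_list S (mem_coset g' h H₂ hh) (mem_coset g h₁ H₁ hh₁)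
    (l ++ w f₁⁻¹) (glist_append hlg (hwg _)) ?_ ?_
  · rw [List.prod_append, hwp]
    calc l.prod * f₁⁻¹ = (g' * h)⁻¹ * (g' * h * l.prod) * f₁⁻¹ := by group
      _ = (g' * h)⁻¹ * (g * (h₁ * f₁)) * f₁⁻¹ := by rw [hye]
      _ = (g' * h)⁻¹ * (g * h₁) := by group
  · have e3 : (w f₁⁻¹).length ≤ c₁ := (hc₁ f₁ hf₁).2
    rw [List.length_append]
    have : l.length + (w f₁⁻¹).length < N := by omega
    exact_mod_cast this

/-- Transverse walls have `D`-close cosets. -/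
lemma trans_dclose (S : Finset G) {A B A' B' : Set G}
    (cover : A ∪ B = Set.univ) (cover' : A' ∪ B' = Set.univ)
    (w : G → List G) (hwg : ∀ g, GList S (w g)) (hwp : ∀ g, (w g).prod = g)
    (H₁ H₂ : Subgroup G) (T₁ T₂ : Finset G)
    (hT₁ : Subgroup.closure (T₁ : Set G) = H₁) (hT₂ : Subgroup.closure (T₂ : Set G) = H₂)
    (g g' : G) (F₁ F₂ : Finset G) (c₁ c₂ L₁ L₂ : ℕ)
    (hc₁ : ∀ f ∈ F₁, (w f).length ≤ c₁ ∧ (w f⁻¹).length ≤ c₁)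
    (hc₂ : ∀ f ∈ F₂, (w f).length ≤ c₂ ∧ (w f⁻¹).length ≤ c₂)
    (hL₁ : ∀ a : G, (a ∈ T₁ ∨ a⁻¹ ∈ T₁) → (w a).length ≤ L₁)
    (hL₂ : ∀ a : G, (a ∈ T₂ ∨ a⁻¹ ∈ T₂) → (w a).length ≤ L₂)
    (hK : wallK S A B ⊆ g • ((H₁ : Set G) * (F₁ : Set G)))
    (hK' : wallK S A' B' ⊆ g' • ((H₂ : Set G) * (F₂ : Set G)))
    (cAA : (A ∩ A').Nonempty) (cAB : (A ∩ B').Nonempty)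
    (cBA : (B ∩ A').Nonempty) (cBB : (B ∩ B').Nonempty)
    (N : ℕ) (hN : 2 * c₁ + 2 * c₂ + L₁ + L₂ + c₁ + c₂ < N) :
    DClose (S : Set G) (N : ℝ) (g • (H₁ : Set G)) (g' • (H₂ : Set G)) := by
  by_cases hint : (wallK S A B ∩ wallK S A' B').Nonempty
  · obtain ⟨z, hz, hz'⟩ := hint
    obtain ⟨y₁, hy₁, hy₁e⟩ := hK hz
    obtain ⟨h₁, hh₁, f₁, hf₁, rfl⟩ := hy₁
    obtain ⟨y₂, hy₂, hy₂e⟩ := hK' hz'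
    obtain ⟨h₂, hh₂, f₂, hf₂, rfl⟩ := hy₂
    simp only [smul_eq_mul] at hy₁e hy₂e
    refine dclose_of_list S (mem_coset g h₁ H₁ hh₁) (mem_coset g' h₂ H₂ hh₂)
      (w f₁ ++ w f₂⁻¹) (glist_append (hwg _) (hwg _)) ?_ ?_
    · rw [List.prod_append, hwp, hwp]
      calc f₁ * f₂⁻¹ = (g * h₁)⁻¹ * (g * (h₁ * f₁)) * f₂⁻¹ := by group
        _ = (g * h₁)⁻¹ * (g' * (h₂ * f₂)) * f₂⁻¹ := by rw [hy₁e, hy₂e]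
        _ = (g * h₁)⁻¹ * (g' * h₂) := by group
    · have e1 : (w f₁).length ≤ c₁ := (hc₁ f₁ hf₁).1
      have e2 : (w f₂⁻¹).length ≤ c₂ := (hc₂ f₂ hf₂).2
      rw [List.length_append]
      have : (w f₁).length + (w f₂⁻¹).length < N := by omega
      exact_mod_cast this
  · by_cases caseA : (wallK S A' B' ∩ A).Nonempty ∧ (wallK S A' B' ∩ B).Nonempty
    · obtain ⟨⟨u', hu, huA⟩, ⟨v', hv, hvB⟩⟩ := caseA
      exact dclose_symm (case1_dclose S cover w hwg hwp H₁ H₂ T₂ hT₂ g g' F₁ F₂ c₁ c₂ L₂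
        hc₁ hc₂ hL₂ hK hK' u' v' hu huA hv hvB N (by omega))
    · by_cases caseB : (wallK S A B ∩ A').Nonempty ∧ (wallK S A B ∩ B').Nonempty
      · obtain ⟨⟨u', hu, huA⟩, ⟨v', hv, hvB⟩⟩ := caseB
        exact case1_dclose S cover' w hwg hwp H₂ H₁ T₁ hT₁ g' g F₂ F₁ c₂ c₁ L₁
          hc₂ hc₁ hL₁ hK' hK u' v' hu huA hv hvB N (by omega)
      · exfalso
        have hdisj : ∀ z, z ∈ wallK S A B → z ∈ wallK S A' B' → False :=
          fun z h h' => hint ⟨z, h, h'⟩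
        rw [not_and_or] at caseA caseB
        have hside' : wallK S A' B' ⊆ A \ B ∨ wallK S A' B' ⊆ B \ A := by
          rcases caseA with h | h
          · refine Or.inr (fun z hz => ?_)
            have hzB : z ∈ B := ((show z ∈ A ∪ B from cover ▸ Set.mem_univ _)).elim
              (fun hA => absurd ⟨z, hz, hA⟩ h) id
            exact ⟨hzB, fun hA => h ⟨z, hz, hA⟩⟩
          · refine Or.inl (fun z hz => ?_)
            have hzA : z ∈ A := ((show z ∈ A ∪ B from cover ▸ Set.mem_univ _)).elim
              id (fun hB => absurd ⟨z, hz, hB⟩ h)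
            exact ⟨hzA, fun hB => h ⟨z, hz, hB⟩⟩
        have hside : wallK S A B ⊆ A' \ B' ∨ wallK S A B ⊆ B' \ A' := by
          rcases caseB with h | h
          · refine Or.inr (fun z hz => ?_)
            have hzB : z ∈ B' := ((show z ∈ A' ∪ B' from cover' ▸ Set.mem_univ _)).elim
              (fun hA => absurd ⟨z, hz, hA⟩ h) id
            exact ⟨hzB, fun hA => h ⟨z, hz, hA⟩⟩
          · refine Or.inl (fun z hz => ?_)
            have hzA : z ∈ A' := ((show z ∈ A' ∪ B' from cover' ▸ Set.mem_univ _)).elim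
              id (fun hB => absurd ⟨z, hz, hB⟩ h)
            exact ⟨hzA, fun hB => h ⟨z, hz, hB⟩⟩
        rcases hside with hK1 | hK1 <;> rcases hside' with hK2 | hK2
        · exact case3 S (A := A) (B := B) (A' := A') (B' := B') cover cover' w hwg hwp
            hK1 hK2 hdisj cBB cAA
        · exact case3 S (A := B) (B := A) (A' := A') (B' := B')
            (by rw [Set.union_comm]; exact cover) cover' w hwg hwp
            (by rw [wallK_comm]; exact hK1) hK2
            (fun z h h' => hdisj z (by rw [wallK_comm S A B]; exact h) h') cAB cBA
        · exact case3 S (A := A) (B := B) (A' := B') (B' := A')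
            cover (by rw [Set.union_comm]; exact cover') w hwg hwp
            hK1 (by rw [wallK_comm]; exact hK2)
            (fun z h h' => hdisj z h (by rw [wallK_comm S A' B']; exact h')) cBA cAB
        · exact case3 S (A := B) (B := A) (A' := B') (B' := A')
            (by rw [Set.union_comm]; exact cover) (by rw [Set.union_comm]; exact cover')
            w hwg hwp
            (by rw [wallK_comm]; exact hK1) (by rw [wallK_comm]; exact hK2)
            (fun z h h' => hdisj z (by rw [wallK_comm S A B]; exact h)
              (by rw [wallK_comm S A' B']; exact h'))
            cAA cBB

end Aux

/-- **Finite dimensionality of the cube complex dual to a system of `H_i`-walls.**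
Let `G` have finite generating set `S`, let `H 1, …, H r` be finitely generated subgroups
with bounded packing in `G`, and choose an `H i`-wall `{U i, V i}` for each `i`.  In the
wallspace on `G` whose walls are the translates `{g·U i, g·V i}`, there is a uniform bound
`k` on the cardinality of any collection of pairwise transverse walls; hence the dual
CAT(0) cube complex is finite dimensional. -/
theorem hwalls_bounded_packing_finite_dimension
    {G : Type*} [Group G]
    (S : Finset G) (hS : Subgroup.closure (S : Set G) = ⊤)
    (r : ℕ) (H : Fin r → Subgroup G)
    (hfg : ∀ i, (H i).FG)
    (hbp : ∀ i, BoundedPacking (S : Set G) (H i))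
    (U V : Fin r → Set G)
    (hwall : ∀ i, IsHWall S (H i) (U i) (V i)) :
    ∃ k : ℕ, ∀ T : Finset (Set G × Set G),
      (∀ p ∈ T, ∃ (g : G) (i : Fin r),
        p = (g • U i, g • V i) ∨ p = (g • V i, g • U i)) →
      (∀ p ∈ T, ∀ q ∈ T, p ≠ q →
        (p.1 ∩ q.1).Nonempty ∧ (p.1 ∩ q.2).Nonempty ∧
        (p.2 ∩ q.1).Nonempty ∧ (p.2 ∩ q.2).Nonempty) →
      T.card ≤ k := by
  classical
  rcases Nat.eq_zero_or_pos r with hr | hr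
  · subst hr
    refine ⟨0, fun T hrep _ => ?_⟩
    have hT : T = ∅ := Finset.eq_empty_of_forall_notMem (fun p hp => by
      obtain ⟨g, i, _⟩ := hrep p hp; exact i.elim0)
    simp [hT]
  haveI : Nonempty (Fin r) := ⟨⟨0, hr⟩⟩
  -- a word for every group element
  have hword : ∀ g : G, ∃ l : List G, GList S l ∧ l.prod = g := by
    intro g
    obtain ⟨l, hl, hp⟩ := exists_word (S : Set G) g (by rw [hS]; trivial)
    exact ⟨l, fun a ha => by simpa using hl a ha, hp⟩
  choose w hwg hwp using hword
  -- the wall sets are cocompactly contained in the cosets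
  have hFex : ∀ i, ∃ Fi : Finset G,
      wallK S (U i) (V i) ⊆ (H i : Set G) * (Fi : Set G) := by
    intro i
    obtain ⟨F₁, h₁⟩ := (hwall i).inter_hfinite
    obtain ⟨F₂, h₂⟩ := (hwall i).frontierU
    obtain ⟨F₃, h₃⟩ := (hwall i).frontierV
    refine ⟨F₁ ∪ F₂ ∪ F₃, ?_⟩
    have hsub : {h : G | h ∈ H i ∧ h • U i = U i ∧ h • V i = V i} ⊆ (H i : Set G) :=
      fun x hx => hx.1
    have hc1 : (F₁ : Set G) ⊆ ((F₁ ∪ F₂ ∪ F₃ : Finset G) : Set G) := by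
      intro x hx; simp at hx ⊢; tauto
    have hc2 : (F₂ : Set G) ⊆ ((F₁ ∪ F₂ ∪ F₃ : Finset G) : Set G) := by
      intro x hx; simp at hx ⊢; tauto
    have hc3 : (F₃ : Set G) ⊆ ((F₁ ∪ F₂ ∪ F₃ : Finset G) : Set G) := by
      intro x hx; simp at hx ⊢; tauto
    rintro z ((hz | hz) | hz)
    · exact Set.mul_subset_mul Set.Subset.rfl hc1 (h₁ hz)
    · exact Set.mul_subset_mul hsub hc2 (h₂ hz)
    · exact Set.mul_subset_mul hsub hc3 (h₃ hz)
  choose F hF using hFex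
  choose Gn hGn using hfg
  -- length constants
  set c : Fin r → ℕ := fun i => (F i).sup fun f => max (w f).length (w f⁻¹).length with hcdef
  have hcF : ∀ i, ∀ f ∈ F i, (w f).length ≤ c i ∧ (w f⁻¹).length ≤ c i := by
    intro i f hf
    have h2 := Finset.le_sup (f := fun f => max (w f).length (w f⁻¹).length) hf
    exact ⟨le_trans (le_max_left _ _) h2, le_trans (le_max_right _ _) h2⟩
  set L : Fin r → ℕ := fun i => (Gn i).sup fun t => max (w t).length (w t⁻¹).length with hLdef
  have hLT : ∀ i, ∀ a : G, (a ∈ Gn i ∨ a⁻¹ ∈ Gn i) → (w a).length ≤ L i := by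
    intro i a ha
    rcases ha with h | h
    · have h2 := Finset.le_sup (f := fun t => max (w t).length (w t⁻¹).length) h
      exact le_trans (le_max_left _ _) h2
    · have h2 := Finset.le_sup (f := fun t => max (w t).length (w t⁻¹).length) h
      simp only [inv_inv] at h2
      exact le_trans (le_max_right _ _) h2
  set sB : ℕ := ∑ i : Fin r, (3 * c i + L i) with hsBdef
  set N : ℕ := 2 * sB + 1 with hNdef
  have hNbound : ∀ i j : Fin r, 2 * c i + 2 * c j + L i + L j + c i + c j < N := by
    intro i j
    have h1 : 3 * c i + L i ≤ sB :=
      Finset.single_le_sum (f := fun i => 3 * c i + L i) (fun _ _ => Nat.zero_le _)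
        (Finset.mem_univ i)
    have h2 : 3 * c j + L j ≤ sB :=
      Finset.single_le_sum (f := fun i => 3 * c i + L i) (fun _ _ => Nat.zero_le _)
        (Finset.mem_univ j)
    omega
  have hDpos : (0 : ℝ) < (N : ℕ) := by
    have : 0 < N := by omega
    exact_mod_cast this
  choose k hk using fun i => hbp i (N : ℝ) hDpos
  refine ⟨∑ i : Fin r, 2 * k i, ?_⟩
  intro T hrep htrans
  have hrep' : ∀ p, p ∈ T → ∃ gi : G × Fin r,
      p = (gi.1 • U gi.2, gi.1 • V gi.2) ∨ p = (gi.1 • V gi.2, gi.1 • U gi.2) := by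
    intro p hp; obtain ⟨g, i, h⟩ := hrep p hp; exact ⟨(g, i), h⟩
  choose! giF hgiF using hrep'
  -- wall data for members of T
  have hwd : ∀ p, p ∈ T → (p.1 ∪ p.2 = Set.univ) ∧
      wallK S p.1 p.2 ⊆ (giF p).1 • ((H (giF p).2 : Set G) * (F (giF p).2 : Set G)) := by
    intro p hp
    rcases hgiF p hp with h | h <;>
      (have h1 := congrArg Prod.fst h; have h2 := congrArg Prod.snd h;
       simp only at h1 h2; rw [h1, h2])
    · constructor
      · rw [← Set.smul_set_union, (hwall _).cover, Set.smul_set_univ]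
      · rw [wallK_smul]
        exact Set.smul_set_mono (hF _)
    · constructor
      · rw [← Set.smul_set_union, Set.union_comm, (hwall _).cover, Set.smul_set_univ]
      · rw [wallK_comm, wallK_smul]
        exact Set.smul_set_mono (hF _)
  have hfiber := Finset.card_eq_sum_card_fiberwise (s := T) (t := Finset.univ)
    (f := fun p => (giF p).2) (fun p _ => Finset.mem_univ _)
  rw [hfiber]
  refine Finset.sum_le_sum ?_
  intro i _
  set Ti := T.filter (fun p => (giF p).2 = i) with hTidef
  set f : Set G × Set G → Set G := fun p => (giF p).1 • (H i : Set G) with hfdef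
  have himg : (Ti.image f).card ≤ k i := by
    have hpack := hk i (↑(Ti.image f)) ?_ ?_
    · calc (Ti.image f).card = (↑(Ti.image f) : Set (Set G)).ncard :=
          (Set.ncard_coe_finset _).symm
        _ ≤ k i := hpack.2
    · intro A hA
      rw [Finset.mem_coe, Finset.mem_image] at hA
      obtain ⟨p, hp, rfl⟩ := hA
      exact ⟨(giF p).1, rfl⟩
    · intro c₁ hc₁ c₂ hc₂ hne
      rw [Finset.mem_coe, Finset.mem_image] at hc₁ hc₂
      obtain ⟨p, hp, rfl⟩ := hc₁
      obtain ⟨q, hq, rfl⟩ := hc₂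
      have hpT : p ∈ T := (Finset.mem_filter.1 hp).1
      have hqT : q ∈ T := (Finset.mem_filter.1 hq).1
      have hpi : (giF p).2 = i := (Finset.mem_filter.1 hp).2
      have hqi : (giF q).2 = i := (Finset.mem_filter.1 hq).2
      have hpq : p ≠ q := fun h => hne (by rw [h])
      obtain ⟨t1, t2, t3, t4⟩ := htrans p hpT q hqT hpq
      obtain ⟨coverp, hKp⟩ := hwd p hpT
      obtain ⟨coverq, hKq⟩ := hwd q hqT
      rw [hpi] at hKp
      rw [hqi] at hKq
      exact trans_dclose S coverp coverq w hwg hwp (H i) (H i) (Gn i) (Gn i)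
        (hGn i) (hGn i) (giF p).1 (giF q).1 (F i) (F i) (c i) (c i) (L i) (L i)
        (hcF i) (hcF i) (hLT i) (hLT i) hKp hKq t1 t2 t3 t4 N (hNbound i i)
  have hfib2 : Ti.card ≤ 2 * (Ti.image f).card := by
    refine Finset.card_le_mul_card_image (f := f) Ti 2 ?_
    intro A hA
    rw [Finset.mem_image] at hA
    obtain ⟨p₀, hp₀, hA⟩ := hA
    have hp₀T : p₀ ∈ T := (Finset.mem_filter.1 hp₀).1
    have hp₀i : (giF p₀).2 = i := (Finset.mem_filter.1 hp₀).2
    refine le_trans (Finset.card_le_card (?_ : Ti.filter (fun x => f x = A) ⊆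
      {((giF p₀).1 • U i, (giF p₀).1 • V i), ((giF p₀).1 • V i, (giF p₀).1 • U i)})) ?_
    · intro q hq
      obtain ⟨hqTi, hfq⟩ := Finset.mem_filter.1 hq
      have hqT : q ∈ T := (Finset.mem_filter.1 hqTi).1
      have hqi : (giF q).2 = i := (Finset.mem_filter.1 hqTi).2
      have hcos : (giF q).1 • (H i : Set G) = (giF p₀).1 • (H i : Set G) := by
        rw [← hA] at hfq; exact hfq
      have hmem1 : (giF q).1 ∈ (giF p₀).1 • (H i : Set G) := by
        rw [← hcos]
        exact ⟨1, Subgroup.one_mem _, mul_one _⟩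
      obtain ⟨h, hh, hhe⟩ := hmem1
      simp only [smul_eq_mul] at hhe
      have hqe : (giF q).1 = (giF p₀).1 * h := hhe.symm
      rcases hgiF q hqT with hq' | hq' <;>
        rcases (hwall i).invar h hh with ⟨e1, e2⟩ | ⟨e1, e2⟩ <;>
          rw [hqi] at hq' <;>
            rw [hq', hqe] <;>
              simp [mul_smul, e1, e2]
    · exact le_trans (Finset.card_insert_le _ _) (by simp)
  calc Ti.card ≤ 2 * (Ti.image f).card := hfib2
    _ ≤ 2 * k i := by omega
end

section
/- (Connectedness of the dual cube complex) Let (X, W) be a wallspace. Then the 0-cubes of the dual cube complex form a connected graph under adjacency: for any two 0-cubes c and d there is a finite sequence c = c₀, c₁, …, c_n = d of 0-cubes in which consecutive 0-cubes are adjacent (differ at exactly one wall index). -/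
open Pointwise

/-- **Connectedness of the dual cube complex.**  For any two `0`-cubes `c` and `d` of the
dual cube complex of a wallspace, there is a finite sequence of `0`-cubes from `c` to `d` in
which consecutive `0`-cubes are adjacent (differ at exactly one wall index). -/
theorem dual_cube_complex_connected
    {X ι : Type*} (W : Wallspace X ι)
    (c d : ι → Bool) (hc : W.IsZeroCube c) (hd : W.IsZeroCube d) :
    Relation.ReflTransGen W.Adjacent c d := by
  classical
  -- For walls where an orientation differs from `d`, the two selected sides cover `X`.
  have hcov : ∀ (c' : ι → Bool) (j : ι), c' j ≠ d j →
      W.side j (c' j) ∪ W.side j (d j) = Set.univ := by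
    intro c' j hj
    cases hcj : c' j <;> cases hdj : d j <;>
      simp_all [Wallspace.side, W.cover j, Set.union_comm]
  -- Main induction: if the difference set has ≤ n elements, we can connect.
  have key : ∀ n : ℕ, ∀ c : ι → Bool, W.IsZeroCube c →
      ∀ h : {i | c i ≠ d i}.Finite, h.toFinset.card ≤ n →
      Relation.ReflTransGen W.Adjacent c d := by
    intro n
    induction n with
    | zero =>
      intro c hcz h hcard
      have hD : {i | c i ≠ d i} = ∅ := by
        have h0 : h.toFinset = ∅ := Finset.card_eq_zero.mp (Nat.le_zero.mp hcard)
        simpa [Set.Finite.toFinset_eq_empty] using h0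
      have hcd : c = d := funext fun i => by
        by_contra hne
        exact (Set.eq_empty_iff_forall_notMem.mp hD i) hne
      exact hcd ▸ Relation.ReflTransGen.refl
    | succ n ih =>
      intro c hcz h hcard
      by_cases hDne : {i | c i ≠ d i}.Nonempty
      · set D := {i : ι | c i ≠ d i} with hDdef
        obtain ⟨i, hiD, hmax⟩ : ∃ i ∈ D, ∀ j ∈ D, W.side i (d i) ≤ W.side j (d j) →
            W.side i (d i) = W.side j (d j) := by
          obtain ⟨i, hiD, hmax'⟩ := Set.Finite.exists_maximalFor (fun j => W.side j (d j)) D h hDne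
          exact ⟨i, hiD, fun j hj hle => le_antisymm hle (hmax' hj hle)⟩
        -- basic covering fact for members of D
        have hgoodside : ∀ q ∈ D, W.side q (c q) ∪ W.side q (d q) = Set.univ :=
          fun q hq => hcov c q hq
        -- disjointness forces containment of d-sides
        have hsub : ∀ p ∈ D, ∀ q ∈ D, W.side p (d p) ∩ W.side q (c q) = ∅ →
            W.side p (d p) ⊆ W.side q (d q) := by
          intro p hp q hq hdisj x hx
          have hxu : x ∈ W.side q (c q) ∪ W.side q (d q) := by
            rw [hgoodside q hq]; trivial
          rcases hxu with hxc | hxd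
          · exact absurd (Set.mem_inter hx hxc) (by simp [hdisj])
          · exact hxd
        -- when both d-sides equal the maximal one, disjointness pins down the c-side
        have hceq : ∀ p ∈ D, ∀ q ∈ D, W.side p (d p) = W.side i (d i) →
            W.side q (d q) = W.side i (d i) →
            W.side p (d p) ∩ W.side q (c q) = ∅ →
            W.side q (c q) = (W.side i (d i))ᶜ := by
          intro p hp q hq hpB hqB hdisj
          apply Set.Subset.antisymm
          · intro x hx hxB
            have hmem : x ∈ W.side p (d p) ∩ W.side q (c q) :=
              ⟨by rw [hpB]; exact hxB, hx⟩
            simp [hdisj] at hmem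
          · intro x hx
            have hxu : x ∈ W.side q (c q) ∪ W.side q (d q) := by
              rw [hgoodside q hq]; trivial
            rcases hxu with h1 | h1
            · exact h1
            · exact absurd (hqB ▸ h1) hx
        -- identify U/V of such a wall
        have hUV : ∀ p ∈ D, W.side p (d p) = W.side i (d i) →
            W.side p (c p) = (W.side i (d i))ᶜ →
            (W.U p = W.side i (d i) ∧ W.V p = (W.side i (d i))ᶜ) ∨
            (W.U p = (W.side i (d i))ᶜ ∧ W.V p = W.side i (d i)) := by
          intro p hp hd' hc'
          have hne : c p ≠ d p := hp
          cases hdp : d p with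
          | true =>
            have hcp : c p = false := by
              rw [hdp] at hne; simpa using hne
            rw [hdp] at hd'; rw [hcp] at hc'
            simp only [Wallspace.side] at hd' hc'
            exact Or.inl ⟨hd', hc'⟩
          | false =>
            have hcp : c p = true := by
              rw [hdp] at hne; simpa using hne
            rw [hdp] at hd'; rw [hcp] at hc'
            simp only [Wallspace.side] at hd' hc'
            exact Or.inr ⟨hc', hd'⟩
        have hBne : (W.side i (d i)).Nonempty := by
          have h1 := hd.1 i i; rwa [Set.inter_self] at h1
        -- there is a "good" wall m ∈ D that can be flipped
        have hex : ∃ m ∈ D, ∀ k ∈ D, k ≠ m →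
            (W.side m (d m) ∩ W.side k (c k)).Nonempty := by
          by_cases hg : ∀ k ∈ D, k ≠ i → (W.side i (d i) ∩ W.side k (c k)).Nonempty
          · exact ⟨i, hiD, hg⟩
          · push_neg at hg
            obtain ⟨j, hjD, hji, hjdisj⟩ := hg
            have hjd : W.side j (d j) = W.side i (d i) :=
              (hmax j hjD (hsub i hiD j hjD hjdisj)).symm
            have hjc : W.side j (c j) = (W.side i (d i))ᶜ :=
              hceq i hiD j hjD rfl hjd hjdisj
            refine ⟨j, hjD, ?_⟩
            intro k hkD hkj
            by_contra hkdisj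
            rw [Set.not_nonempty_iff_eq_empty] at hkdisj
            have hkd : W.side k (d k) = W.side i (d i) := by
              have h1 : W.side i (d i) ⊆ W.side k (d k) :=
                hjd ▸ hsub j hjD k hkD hkdisj
              exact (hmax k hkD h1).symm
            have hkc : W.side k (c k) = (W.side i (d i))ᶜ :=
              hceq j hjD k hkD hjd hkd hkdisj
            have hBcne : ((W.side i (d i))ᶜ).Nonempty := by
              have h1 := hcz.1 j j; rwa [Set.inter_self, hjc] at h1
            have hjk : j ≠ k := fun hx => hkj hx.symm
            rcases hUV j hjD hjd hjc with ⟨hj1, hj2⟩ | ⟨hj1, hj2⟩ <;>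
              rcases hUV k hkD hkd hkc with ⟨hk1, hk2⟩ | ⟨hk1, hk2⟩
            · exact W.no_dup_partition j k hjk
                (Or.inl ⟨by rw [hj1, hk1], by rw [hj2, hk2]⟩)
                (by rw [hj1, hj2, Set.inter_compl_self])
                ⟨hj1 ▸ hBne, hj2 ▸ hBcne⟩
            · exact W.no_dup_partition j k hjk
                (Or.inr ⟨by rw [hj1, hk2], by rw [hj2, hk1]⟩)
                (by rw [hj1, hj2, Set.inter_compl_self])
                ⟨hj1 ▸ hBne, hj2 ▸ hBcne⟩
            · exact W.no_dup_partition j k hjk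
                (Or.inr ⟨by rw [hj1, hk2], by rw [hj2, hk1]⟩)
                (by rw [hj1, hj2, Set.compl_inter_self])
                ⟨hj1 ▸ hBcne, hj2 ▸ hBne⟩
            · exact W.no_dup_partition j k hjk
                (Or.inl ⟨by rw [hj1, hk1], by rw [hj2, hk2]⟩)
                (by rw [hj1, hj2, Set.compl_inter_self])
                ⟨hj1 ▸ hBcne, hj2 ▸ hBne⟩
        obtain ⟨m, hmD, hm⟩ := hex
        -- flip wall m
        set c' : ι → Bool := Function.update c m (d m) with hc'def
        have hc'm : c' m = d m := Function.update_self m (d m) c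
        have hc'j : ∀ j, j ≠ m → c' j = c j := fun j hj =>
          Function.update_of_ne hj _ _
        have hmD' : c m ≠ d m := hmD
        have hcube' : W.IsZeroCube c' := by
          constructor
          · intro a b
            by_cases ha : a = m <;> by_cases hb : b = m
            · rw [ha, hb, hc'm, Set.inter_self]
              have h1 := hd.1 m m; rwa [Set.inter_self] at h1
            · rw [ha, hc'm, hc'j b hb]
              by_cases hbD : b ∈ D
              · exact hm b hbD hb
              · have hbd : c b = d b := not_not.mp hbD
                rw [hbd]; exact hd.1 m b
            · rw [hb, hc'm, hc'j a ha, Set.inter_comm]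
              by_cases haD : a ∈ D
              · exact hm a haD ha
              · have had : c a = d a := not_not.mp haD
                rw [had]; exact hd.1 m a
            · rw [hc'j a ha, hc'j b hb]; exact hcz.1 a b
          · intro x
            apply Set.Finite.subset ((hcz.2 x).insert m)
            intro j hj
            by_cases hjm : j = m
            · simp [hjm]
            · simp only [Set.mem_setOf_eq] at hj
              rw [hc'j j hjm] at hj
              exact Set.mem_insert_of_mem _ hj
        have hadj : W.Adjacent c c' := by
          refine ⟨hcz, hcube', m, ?_, ?_⟩
          · show c m ≠ c' m
            rw [hc'm]; exact hmD'
          · intro j hj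
            by_contra hjm
            exact hj (hc'j j hjm).symm
        have hfin' : {j | c' j ≠ d j}.Finite := by
          apply h.subset
          intro j hj
          simp only [Set.mem_setOf_eq] at hj ⊢
          by_cases hjm : j = m
          · subst hjm; exact absurd hc'm hj
          · rw [hc'j j hjm] at hj; exact hj
        have hsubErase : hfin'.toFinset ⊆ h.toFinset.erase m := by
          intro j hj
          rw [Set.Finite.mem_toFinset] at hj
          have hjm : j ≠ m := by rintro rfl; exact hj hc'm
          rw [Finset.mem_erase, Set.Finite.mem_toFinset]
          refine ⟨hjm, ?_⟩
          show c j ≠ d j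
          rw [← hc'j j hjm]; exact hj
        have hcard' : hfin'.toFinset.card ≤ n := by
          have h1 : (h.toFinset.erase m).card = h.toFinset.card - 1 :=
            Finset.card_erase_of_mem (by rw [Set.Finite.mem_toFinset]; exact hmD)
          have h2 := Finset.card_le_card hsubErase
          omega
        exact Relation.ReflTransGen.head hadj (ih c' hcube' hfin' hcard')
      · have hcd : c = d := funext fun i => by
          by_contra hne
          exact hDne ⟨i, hne⟩
        exact hcd ▸ Relation.ReflTransGen.refl
  -- the difference set of the original pair is finite
  have hfin : {i | c i ≠ d i}.Finite := by
    by_cases hX : Nonempty X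
    · obtain ⟨x⟩ := hX
      apply Set.Finite.subset (((hc.2 x).union (hd.2 x)).union (W.betwixt_finite x))
      intro i hi
      simp only [Set.mem_union, Set.mem_setOf_eq] at hi ⊢
      by_cases h1 : x ∈ W.side i (c i)
      · by_cases h2 : x ∈ W.side i (d i)
        · right
          cases hci : c i <;> cases hdi : d i <;>
            simp_all [Wallspace.side] <;> exact ⟨h1, h2⟩
        · exact Or.inl (Or.inr h2)
      · exact Or.inl (Or.inl h1)
    · have hD : {i : ι | c i ≠ d i} = ∅ := by
        ext i
        simp only [Set.mem_setOf_eq, Set.mem_empty_iff_false, iff_false, not_not]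
        by_contra hne
        obtain ⟨x, _⟩ := hc.1 i i
        exact hX ⟨x⟩
      rw [hD]; exact Set.finite_empty
  exact key hfin.toFinset.card c hc hfin le_rfl
end

section
/- (Key step in simple connectedness of the dual) Let (X, W) be a wallspace and let c₀, c₁, …, c_t = c₀ be a closed path of 0-cubes of the dual cube complex in which consecutive 0-cubes are adjacent; call the unique index at which c_{k−1} and c_k differ the wall dual to the k-th edge. Suppose the p-th and q-th edges are dual to the same index i₁ with p + 1 < q ≤ t, and the pair (p, q) is innermost: there is no pair (r, s) ≠ (p, q) with p ≤ r < s ≤ q such that the r-th and s-th edges are dual to a common index. Then i₁ and the index i₂ dual to the (p+1)-st edge are transverse walls. -/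
open Pointwise

/-- **Key step in the simple connectedness of the dual cube complex.**  Let
`c 0, c 1, …, c t = c 0` be a closed path of `0`-cubes in which the `k`-th edge
(from `c (k-1)` to `c k`) is dual to the wall `w k`.  If the `p`-th and `q`-th edges are
dual to the same wall (`1 ≤ p`, `p + 1 < q ≤ t`) and the pair `(p, q)` is innermost, then
the wall `w p` dual to the `p`-th edge and the wall `w (p+1)` dual to the `(p+1)`-st edge
are transverse. -/
theorem innermost_pair_gives_transverse_walls
    {X ι : Type*} (W : Wallspace X ι)
    (t : ℕ) (c : ℕ → ι → Bool) (w : ℕ → ι)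
    (hcube : ∀ k ≤ t, W.IsZeroCube (c k))
    (hclosed : c t = c 0)
    (hedge : ∀ k, 1 ≤ k → k ≤ t →
      (c (k - 1) (w k) ≠ c k (w k) ∧ ∀ j : ι, j ≠ w k → c (k - 1) j = c k j))
    (p q : ℕ) (hp : 1 ≤ p) (hpq : p + 1 < q) (hqt : q ≤ t)
    (hdual : w p = w q)
    (hinner : ∀ r s : ℕ, p ≤ r → r < s → s ≤ q → (r, s) ≠ (p, q) → w r ≠ w s) :
    W.Transverse (w p) (w (p + 1)) := by
  set i₁ := w p with hi₁
  set i₂ := w (p + 1) with hi₂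
  have hne : i₁ ≠ i₂ := hinner p (p + 1) le_rfl (by omega) (by omega)
    (by intro h; injection h; omega)
  -- c k i₁ is constant for p ≤ k ≤ q - 1
  have const1 : ∀ k, p ≤ k → k ≤ q - 1 → c k i₁ = c p i₁ := by
    intro k hk1 hk2
    induction k with
    | zero => omega
    | succ n ih =>
      rcases eq_or_lt_of_le hk1 with h | h
      · rw [← h]
      · have hstep : c n i₁ = c (n + 1) i₁ :=
          (hedge (n + 1) (by omega) (by omega)).2 i₁
            (hinner p (n + 1) le_rfl (by omega) (by omega)
              (by intro h; injection h; omega))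
        rw [← hstep]
        exact ih (by omega) (by omega)
  -- c k i₂ is constant for p + 1 ≤ k ≤ q
  have const2 : ∀ k, p + 1 ≤ k → k ≤ q → c k i₂ = c (p + 1) i₂ := by
    intro k hk1 hk2
    induction k with
    | zero => omega
    | succ n ih =>
      rcases eq_or_lt_of_le hk1 with h | h
      · rw [← h]
      · have hstep : c n i₂ = c (n + 1) i₂ :=
          (hedge (n + 1) (by omega) (by omega)).2 i₂
            (hinner (p + 1) (n + 1) (by omega) (by omega) (by omega)
              (by intro h; injection h; omega))
        rw [← hstep]
        exact ih (by omega) (by omega)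
  -- values at the four relevant 0-cubes
  have e1 : c (p - 1) i₁ = !(c p i₁) := by
    have h := (hedge p hp (by omega)).1
    rw [← hi₁] at h
    exact Bool.eq_not_iff.mpr h
  have e2 : c (p - 1) i₂ = c p i₂ := (hedge p hp (by omega)).2 i₂ hne.symm
  have e3 : c (p + 1) i₁ = c p i₁ := by
    have h := (hedge (p + 1) (by omega) (by omega)).2 i₁ hne
    simpa using h.symm
  have e4 : c (p + 1) i₂ = !(c p i₂) := by
    have h := (hedge (p + 1) (by omega) (by omega)).1
    rw [← hi₂] at h
    simp only [Nat.add_sub_cancel] at h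
    exact Bool.eq_not_iff.mpr h.symm
  have e5 : c q i₁ = !(c p i₁) := by
    have h := (hedge q (by omega) hqt).1
    rw [← hdual] at h
    have h2 : c (q - 1) i₁ = c p i₁ := const1 (q - 1) (by omega) le_rfl
    rw [h2] at h
    exact Bool.eq_not_iff.mpr h.symm
  have e6 : c q i₂ = !(c p i₂) := by
    rw [const2 q (by omega) le_rfl, e4]
  -- the four nonempty intersections
  have h00 : (W.side i₁ (c p i₁) ∩ W.side i₂ (c p i₂)).Nonempty :=
    (hcube p (by omega)).1 i₁ i₂
  have h10 : (W.side i₁ (!(c p i₁)) ∩ W.side i₂ (c p i₂)).Nonempty := by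
    have := (hcube (p - 1) (by omega)).1 i₁ i₂
    rwa [e1, e2] at this
  have h01 : (W.side i₁ (c p i₁) ∩ W.side i₂ (!(c p i₂))).Nonempty := by
    have := (hcube (p + 1) (by omega)).1 i₁ i₂
    rwa [e3, e4] at this
  have h11 : (W.side i₁ (!(c p i₁)) ∩ W.side i₂ (!(c p i₂))).Nonempty := by
    have := (hcube q (by omega)).1 i₁ i₂
    rwa [e5, e6] at this
  have key : ∀ b₁ b₂ : Bool, (W.side i₁ b₁ ∩ W.side i₂ b₂).Nonempty := by
    intro b₁ b₂
    cases hx : c p i₁ <;> cases hy : c p i₂ <;> rw [hx, hy] at h00 h10 h01 h11 <;>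
      simp only [Bool.not_true, Bool.not_false] at h00 h10 h01 h11 <;>
      cases b₁ <;> cases b₂ <;> assumption
  exact ⟨hne, key true true, key true false, key false true, key false false⟩
end

section
/- (Nonpositive curvature of the dual, combinatorial form) Let (X, W) be a wallspace, let c be a 0-cube of the dual cube complex, and let i₁, …, i_n be distinct, pairwise transverse wall indices, each of which is reversible at c. Then for every subset T ⊆ {i₁, …, i_n}, the orientation obtained from c by swapping the ordered pair at exactly the indices in T is again a 0-cube. (Thus the n walls span the corner of an n-cube at c, which is the combinatorial content of the flag condition on links.) -/
open Pointwise

/-- **Nonpositive curvature of the dual cube complex, combinatorial form.**  Let `c` be a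
`0`-cube, and let `I` be a finite set of pairwise transverse wall indices each of which is
reversible at `c`.  Then for every subset `T ⊆ I`, the orientation obtained from `c` by
swapping the pair at exactly the indices in `T` is again a `0`-cube; thus the walls of `I`
span the corner of a cube at `c`. -/
theorem transverse_reversible_walls_span_cube
    {X ι : Type*} (W : Wallspace X ι)
    (c : ι → Bool) (hc : W.IsZeroCube c)
    (I : Finset ι) (htr : (I : Set ι).Pairwise W.Transverse)
    (hrev : ∀ i ∈ I, W.Reversible c i)
    (T : Finset ι) (hT : T ⊆ I) :
    ∀ τ : ι → Bool, (∀ j ∈ T, τ j = !(c j)) → (∀ j ∉ T, τ j = c j) →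
      W.IsZeroCube τ := by
  classical
  intro τ hτT hτc
  have hflip : ∀ i ∈ I, W.IsZeroCube (Function.update c i (!(c i))) := by
    intro i hi
    exact hrev i hi _ (Function.update_self i _ c)
      (fun j hj => Function.update_of_ne hj _ _)
  have hside : ∀ j, W.side j (τ j) = W.side j (c j) ∨
      (j ∈ I ∧ W.side j (τ j) = W.side j (!(c j))) := by
    intro j
    by_cases hj : j ∈ T
    · exact Or.inr ⟨hT hj, by rw [hτT j hj]⟩
    · exact Or.inl (by rw [hτc j hj])
  constructor
  · intro i j
    rcases hside i with hi | ⟨hiI, hi⟩ <;> rcases hside j with hj | ⟨hjI, hj⟩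
    · rw [hi, hj]; exact hc.1 i j
    · -- i normal, j flipped
      rcases eq_or_ne i j with rfl | hne
      · rw [hi]; exact hc.1 i i
      · rw [hi, hj]
        have h := (hflip j hjI).1 i j
        rwa [Function.update_of_ne hne, Function.update_self] at h
    · -- i flipped, j normal
      rcases eq_or_ne i j with rfl | hne
      · rw [hj]; exact hc.1 i i
      · rw [hi, hj]
        have h := (hflip i hiI).1 i j
        rwa [Function.update_self, Function.update_of_ne hne.symm] at h
    · rcases eq_or_ne i j with rfl | hne
      · rw [hi]
        have h := (hflip i hiI).1 i i
        rwa [Function.update_self] at h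
      · obtain ⟨-, h1, h2, h3, h4⟩ := htr hiI hjI hne
        rw [hi, hj]
        cases hci : c i <;> cases hcj : c j <;>
          simp only [Bool.not_true, Bool.not_false, Wallspace.side] <;> assumption
  · intro x
    have hsub : {i | x ∉ W.side i (τ i)} ⊆ {i | x ∉ W.side i (c i)} ∪ ↑T := by
      intro i hi
      by_cases hiT : i ∈ T
      · exact Or.inr hiT
      · exact Or.inl (show x ∉ W.side i (c i) by rwa [← hτc i hiT])
    exact ((hc.2 x).union T.finite_toSet).subset hsub
end

section
/- (Descending chain condition) Let (X, W) be a wallspace and let c be a 0-cube of the dual cube complex. Order ordered pairs of subsets of X by (U, V) ⪯ (U', V') if and only if U ⊊ U', or U = U' and V ⊇ V'; write ≺ for strict inequality. Then there is no infinite sequence of wall indices i₀, i₁, i₂, … such that c(i_{k+1}) ≺ c(i_k) for all k, where c(i) denotes the ordered pair (←c(i), →c(i)). -/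
open Pointwise

/-- The partial order `⪯` on ordered pairs of subsets of `X`:
`(U, V) ⪯ (U', V')` iff `U ⊊ U'`, or `U = U'` and `V ⊇ V'`. -/
def pairLe {X : Type*} (p q : Set X × Set X) : Prop :=
  p.1 ⊂ q.1 ∨ (p.1 = q.1 ∧ q.2 ⊆ p.2)

/-- Strict version of `pairLe`. -/
def pairLt {X : Type*} (p q : Set X × Set X) : Prop :=
  pairLe p q ∧ p ≠ q

/-- **Descending chain condition.**  For a `0`-cube `c` of the dual cube complex of a
wallspace, there is no infinite sequence of wall indices `i 0, i 1, …` with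
`c (i (k+1)) ≺ c (i k)` for all `k`, where `c i` denotes the ordered pair
`(←c(i), →c(i))` of halfspaces oriented by `c`. -/
theorem descending_chain_condition
    {X ι : Type*} (W : Wallspace X ι)
    (c : ι → Bool) (hc : W.IsZeroCube c) :
    ¬ ∃ i : ℕ → ι, ∀ k : ℕ,
      pairLt (W.side (i (k + 1)) (c (i (k + 1))), W.side (i (k + 1)) (!(c (i (k + 1)))))
             (W.side (i k) (c (i k)), W.side (i k) (!(c (i k)))) := by
  rintro ⟨i, h⟩
  set A : ℕ → Set X := fun k => W.side (i k) (c (i k)) with hA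
  set B : ℕ → Set X := fun k => W.side (i k) (!(c (i k))) with hB
  have h' : ∀ k, (A (k + 1) ⊂ A k ∨ (A (k + 1) = A k ∧ B k ⊆ B (k + 1))) ∧
      (A (k + 1), B (k + 1)) ≠ (A k, B k) := by
    intro k
    have := h k
    rw [pairLt, pairLe] at this
    exact this
  -- each step, left halfspaces weakly decrease
  have hstep : ∀ k, A (k + 1) ⊆ A k := by
    intro k
    rcases (h' k).1 with hs | ⟨he, _⟩
    · exact hs.subset
    · exact he.subset
  have hAmono : ∀ k m, k ≤ m → A m ⊆ A k := by
    intro k m hkm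
    induction hkm with
    | refl => exact subset_rfl
    | step _ ih => exact (hstep _).trans ih
  -- if left halfspaces agree, right halfspaces strictly increase
  have hBstrict : ∀ k m, k < m → A k = A m → B k ⊂ B m := by
    intro k m
    induction m with
    | zero => omega
    | succ m ih =>
      intro hkm hAeq
      have hkm' : k ≤ m := Nat.lt_succ_iff.mp hkm
      have hAm : A m = A k :=
        subset_antisymm (hAmono k m hkm') (hAeq ▸ hstep m)
      have hA1 : A (m + 1) = A m := by rw [hAm, ← hAeq]
      have hBm : B m ⊂ B (m + 1) := by
        rcases (h' m).1 with hs | ⟨_, hsub⟩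
        · exact absurd hA1 hs.ne
        · refine ⟨hsub, fun hle => (h' m).2 ?_⟩
          have : B (m + 1) = B m := subset_antisymm hle hsub
          rw [hA1, this]
      rcases Nat.lt_or_ge k m with hlt | hge
      · exact (ih hlt hAm.symm).trans hBm
      · have : k = m := le_antisymm hkm' hge
        rwa [this]
  have hinj : Function.Injective i := by
    have key : ∀ k m, k < m → i k ≠ i m := by
      intro k m hkm hieq
      have hAeq : A k = A m := by simp only [hA, hieq]
      have hBeq : B k = B m := by simp only [hB, hieq]
      exact (hBstrict k m hkm hAeq).ne hBeq
    intro a b hab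
    rcases lt_trichotomy a b with hlt | heq | hgt
    · exact absurd hab (key a b hlt)
    · exact heq
    · exact absurd hab.symm (key b a hgt)
  have hcov : ∀ k, A k ∪ B k = Set.univ := by
    intro k
    cases hb : c (i k) with
    | true =>
      simp only [hA, hB, hb, Bool.not_true, Wallspace.side]
      exact W.cover _
    | false =>
      simp only [hA, hB, hb, Bool.not_false, Wallspace.side]
      rw [Set.union_comm]
      exact W.cover _
  by_cases hcase : ∀ k, A (k + 1) = A k
  · -- left halfspaces constant; right halfspaces strictly increase
    have hAc : ∀ m, A m = A 0 := by
      intro m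
      induction m with
      | zero => rfl
      | succ m ih => exact (hcase m).trans ih
    have hB01 : B 0 ⊂ B 1 := hBstrict 0 1 one_pos (hAc 1).symm
    obtain ⟨x, hx1, hx0⟩ := Set.exists_of_ssubset hB01
    have hxA0 : x ∈ A 0 := by
      have hxu : x ∈ A 0 ∪ B 0 := by rw [hcov 0]; trivial
      rcases hxu with hx | hx
      · exact hx
      · exact absurd hx hx0
    have hbet : ∀ m, x ∈ W.U (i (m + 1)) ∩ W.V (i (m + 1)) := by
      intro m
      have hxB : x ∈ B (m + 1) := by
        rcases Nat.lt_or_ge 1 (m + 1) with hlt | hge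
        · exact (hBstrict 1 (m + 1) hlt ((hAc 1).trans (hAc (m + 1)).symm)).subset hx1
        · have : m + 1 = 1 := by omega
          rwa [this]
      have hxA : x ∈ A (m + 1) := by rw [hAc (m + 1)]; exact hxA0
      cases hb : c (i (m + 1)) with
      | true =>
        simp only [hA, hb, Wallspace.side] at hxA
        simp only [hB, hb, Bool.not_true, Wallspace.side] at hxB
        exact ⟨hxA, hxB⟩
      | false =>
        simp only [hA, hb, Wallspace.side] at hxA
        simp only [hB, hb, Bool.not_false, Wallspace.side] at hxB
        exact ⟨hxB, hxA⟩
    have hfin := W.betwixt_finite x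
    have hinf : {j : ι | x ∈ W.U j ∩ W.V j}.Infinite := by
      apply Set.infinite_of_injective_forall_mem
        (f := fun m : ℕ => i (m + 1))
      · intro a b hab
        have := hinj hab
        omega
      · exact hbet
    exact hinf hfin
  · push_neg at hcase
    obtain ⟨k, hk⟩ := hcase
    have hs : A (k + 1) ⊂ A k := by
      rcases (h' k).1 with hs | ⟨he, _⟩
      · exact hs
      · exact absurd he hk
    obtain ⟨x, hxk, hxk1⟩ := Set.exists_of_ssubset hs
    have hfin := hc.2 x
    have hinf : {j : ι | x ∉ W.side j (c j)}.Infinite := by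
      apply Set.infinite_of_injective_forall_mem
        (f := fun m : ℕ => i (k + 1 + m))
      · intro a b hab
        have := hinj hab
        omega
      · intro m
        have : A (k + 1 + m) ⊆ A (k + 1) := hAmono (k + 1) (k + 1 + m) (by omega)
        exact fun hx => hxk1 (this hx)
    exact hinf hfin
end

section
/- (Maximal transverse families span maximal cubes) Let (X, W) be a wallspace with X nonempty. Let I = {i₁, …, i_k} be a finite maximal collection of pairwise transverse wall indices (for every index j ∉ I, j is not transverse to some i ∈ I), each of whose walls is nonvacuous (both closed halfspaces U i and V i are nonempty). Then there exists an orientation σ of the indices outside I such that every full orientation extending σ by an arbitrary choice of orientation at each index of I is a 0-cube of the dual cube complex; moreover σ is unique, so I is the set of independent walls of a unique (maximal) cube of the dual cube complex. -/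
open Pointwise

/-- **Maximal transverse families span maximal cubes.**  Let `(X, W)` be a wallspace with
`X` nonempty, and let `I` be a finite maximal collection of pairwise transverse wall
indices, each of whose walls is nonvacuous.  Then there is an orientation `σ` of the walls
outside `I` such that every full orientation agreeing with `σ` outside `I` is a `0`-cube,
and `σ` is unique with this property; so `I` is the set of independent walls of a unique
(maximal) cube of the dual cube complex. -/
theorem maximal_transverse_family_spans_maximal_cube
    {X ι : Type*} [Nonempty X] (W : Wallspace X ι)
    (I : Finset ι)
    (htr : (I : Set ι).Pairwise W.Transverse)
    (hmax : ∀ j : ι, j ∉ I → ∃ i ∈ I, ¬ W.Transverse j i)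
    (hnv : ∀ i ∈ I, (W.U i).Nonempty ∧ (W.V i).Nonempty) :
    ∃ σ : ι → Bool,
      (∀ τ : ι → Bool, (∀ j ∉ I, τ j = σ j) → W.IsZeroCube τ) ∧
      ∀ σ' : ι → Bool,
        (∀ τ : ι → Bool, (∀ j ∉ I, τ j = σ' j) → W.IsZeroCube τ) →
        ∀ j ∉ I, σ' j = σ j := by
  classical
  have hcases : ∀ u v : Bool, u = v ∨ u = !v := by decide
  have mem_or : ∀ (j : ι) (c : Bool) (x : X), x ∈ W.side j c ∨ x ∈ W.side j (!c) := by
    intro j c x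
    cases c
    · have hx : x ∈ W.U j ∪ W.V j := by rw [W.cover j]; trivial
      exact hx.symm.imp id id
    · have hx : x ∈ W.U j ∪ W.V j := by rw [W.cover j]; trivial
      exact hx
  have nonvac : ∀ i ∈ I, ∀ b : Bool, (W.side i b).Nonempty := by
    intro i hi b; cases b
    · exact (hnv i hi).2
    · exact (hnv i hi).1
  have trans4 : ∀ i ∈ I, ∀ i' ∈ I, i ≠ i' → ∀ b b' : Bool,
      (W.side i b ∩ W.side i' b').Nonempty := by
    intro i hi i' hi' hne b b'
    obtain ⟨-, h1, h2, h3, h4⟩ := htr hi hi' hne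
    cases b <;> cases b' <;> assumption
  -- choice of a wall of `I` with a halfspace contained in a side of `j`, for each `j ∉ I`
  have key : ∀ j : ι, ∃ p : ι × Bool × Bool,
      j ∉ I → p.1 ∈ I ∧ W.side j (!p.2.2) ∩ W.side p.1 p.2.1 = ∅ := by
    intro j
    by_cases hj : j ∈ I
    · exact ⟨(j, true, true), fun h => absurd hj h⟩
    · obtain ⟨i, hi, hni⟩ := hmax j hj
      have hne : j ≠ i := fun h => hj (h ▸ hi)
      have h4 : ¬((W.U j ∩ W.U i).Nonempty ∧ (W.U j ∩ W.V i).Nonempty ∧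
          (W.V j ∩ W.U i).Nonempty ∧ (W.V j ∩ W.V i).Nonempty) := fun h => hni ⟨hne, h⟩
      simp only [not_and_or, Set.not_nonempty_iff_eq_empty] at h4
      rcases h4 with h | h | h | h
      · exact ⟨(i, true, false), fun _ => ⟨hi, h⟩⟩
      · exact ⟨(i, false, false), fun _ => ⟨hi, h⟩⟩
      · exact ⟨(i, true, true), fun _ => ⟨hi, h⟩⟩
      · exact ⟨(i, false, true), fun _ => ⟨hi, h⟩⟩
  choose f hf using key
  obtain ⟨σ, hσeq⟩ : ∃ σ : ι → Bool, ∀ j, σ j = (f j).2.2 := ⟨_, fun _ => rfl⟩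
  have subg : ∀ (j i : ι) (b c : Bool), W.side j (!c) ∩ W.side i b = ∅ →
      W.side i b ⊆ W.side j c := by
    intro j i b c h x hx
    rcases mem_or j c x with h' | h'
    · exact h'
    · exact absurd (show x ∈ (∅ : Set X) from h ▸ ⟨h', hx⟩) (Set.notMem_empty x)
  -- the hard case: the chosen side of `j` also meets the opposite halfspace of the wall
  have hard : ∀ j ∉ I, ∀ i ∈ I, ∀ b c : Bool, W.side j (!c) ∩ W.side i b = ∅ →
      (W.side j c ∩ W.side i (!b)).Nonempty := by
    intro j hj i hi b c hemp
    by_contra hcon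
    rw [Set.not_nonempty_iff_eq_empty] at hcon
    have h1 : W.side i b ⊆ W.side j c := subg j i b c hemp
    have h2 : W.side j c ⊆ W.side i b := by
      intro x hx
      rcases mem_or i b x with h | h
      · exact h
      · exact absurd (show x ∈ (∅ : Set X) from hcon ▸ ⟨hx, h⟩) (Set.notMem_empty x)
    have h3 : W.side i (!b) ⊆ W.side j (!c) := by
      intro x hx
      rcases mem_or j c x with h | h
      · exact absurd (show x ∈ (∅ : Set X) from hcon ▸ ⟨h, hx⟩) (Set.notMem_empty x)
      · exact h
    have h4 : W.side j (!c) ⊆ W.side i (!b) := by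
      intro x hx
      rcases mem_or i b x with h | h
      · exact absurd (show x ∈ (∅ : Set X) from hemp ▸ ⟨hx, h⟩) (Set.notMem_empty x)
      · exact h
    have eq1 : W.side j c = W.side i b := Set.Subset.antisymm h2 h1
    have eq2 : W.side j (!c) = W.side i (!b) := Set.Subset.antisymm h4 h3
    have hij : i ≠ j := fun h => hj (h ▸ hi)
    have hdis : W.U i ∩ W.V i = ∅ := by
      apply Set.eq_empty_iff_forall_notMem.2
      rintro x ⟨hxu, hxv⟩
      have hxb : x ∈ W.side i b ∩ W.side i (!b) := by
        cases b
        · exact ⟨hxv, hxu⟩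
        · exact ⟨hxu, hxv⟩
      exact absurd (show x ∈ (∅ : Set X) from hcon ▸ ⟨h1 hxb.1, hxb.2⟩) (Set.notMem_empty x)
    refine W.no_dup_partition i j hij ?_ hdis (hnv i hi)
    cases b <;> cases c <;>
      simp only [Bool.not_true, Bool.not_false, Wallspace.side] at eq1 eq2 <;>
      first
        | exact Or.inl ⟨eq1.symm, eq2.symm⟩
        | exact Or.inl ⟨eq2.symm, eq1.symm⟩
        | exact Or.inr ⟨eq1.symm, eq2.symm⟩
        | exact Or.inr ⟨eq2.symm, eq1.symm⟩
  -- the chosen side of `j ∉ I` meets every halfspace of every wall of `I`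
  have meetI : ∀ j ∉ I, ∀ i ∈ I, ∀ b' : Bool, (W.side j (σ j) ∩ W.side i b').Nonempty := by
    intro j hj i hi b'
    obtain ⟨hi₀, hemp⟩ := hf j hj
    rw [hσeq j]
    by_cases hii : (f j).1 = i
    · subst hii
      rcases hcases b' ((f j).2.1) with hb | hb
      · rw [hb]
        obtain ⟨z, hz⟩ := nonvac _ hi₀ (f j).2.1
        exact ⟨z, subg _ _ _ _ hemp hz, hz⟩
      · rw [hb]
        exact hard j hj _ hi₀ (f j).2.1 ((f j).2.2) hemp
    · obtain ⟨z, hz1, hz2⟩ := trans4 _ hi₀ i hi hii (f j).2.1 b'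
      exact ⟨z, subg _ _ _ _ hemp hz1, hz2⟩
  -- every extension of σ over I is a 0-cube
  have hσgood : ∀ τ : ι → Bool, (∀ k ∉ I, τ k = σ k) → W.IsZeroCube τ := by
    intro τ hτ
    constructor
    · intro k l
      by_cases hk : k ∈ I
      · by_cases hl : l ∈ I
        · by_cases hkl : k = l
          · subst hkl
            obtain ⟨z, hz⟩ := nonvac k hk (τ k)
            exact ⟨z, hz, hz⟩
          · exact trans4 k hk l hl hkl _ _
        · rw [hτ l hl]
          obtain ⟨z, hz1, hz2⟩ := meetI l hl k hk (τ k)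
          exact ⟨z, hz2, hz1⟩
      · rw [hτ k hk]
        by_cases hl : l ∈ I
        · exact meetI k hk l hl (τ l)
        · rw [hτ l hl, hσeq l]
          obtain ⟨hik, hempk⟩ := hf l hl
          obtain ⟨z, hz1, hz2⟩ := meetI k hk (f l).1 hik (f l).2.1
          exact ⟨z, hz1, subg _ _ _ _ hempk hz2⟩
    · intro x
      have hy : ∀ p : ι × Bool, ∃ z : X, p.1 ∈ I → z ∈ W.side p.1 p.2 := by
        intro p
        by_cases hp : p.1 ∈ I
        · obtain ⟨z, hz⟩ := nonvac p.1 hp p.2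
          exact ⟨z, fun _ => hz⟩
        · exact ⟨Classical.arbitrary X, fun h => absurd h hp⟩
      choose y hy using hy
      have hfin : ((↑I : Set ι) ∪ ⋃ i ∈ (I : Set ι), ⋃ b : Bool,
          ({k : ι | y (i, b) ∈ W.U k ∩ W.V k} ∪ {k : ι |
            (x ∈ W.U k \ W.V k ∧ y (i, b) ∈ W.V k \ W.U k) ∨
            (x ∈ W.V k \ W.U k ∧ y (i, b) ∈ W.U k \ W.V k)})).Finite := by
        refine I.finite_toSet.union (I.finite_toSet.biUnion fun i _ => ?_)
        exact Set.finite_iUnion fun b =>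
          (W.betwixt_finite (y (i, b))).union (W.sep_finite x (y (i, b)))
      refine hfin.subset ?_
      intro k hk
      simp only [Set.mem_setOf_eq] at hk
      by_cases hkI : k ∈ I
      · exact Or.inl hkI
      · right
        rw [hτ k hkI, hσeq k] at hk
        obtain ⟨hik, hempk⟩ := hf k hkI
        have hyk : y ((f k).1, (f k).2.1) ∈ W.side k ((f k).2.2) :=
          subg _ _ _ _ hempk (hy ((f k).1, (f k).2.1) hik)
        refine Set.mem_biUnion hik (Set.mem_iUnion.2 ⟨(f k).2.1, ?_⟩)
        by_cases hbet : y ((f k).1, (f k).2.1) ∈ W.side k (!(f k).2.2)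
        · left
          rcases Bool.eq_false_or_eq_true ((f k).2.2) with hc | hc <;>
            rw [hc] at hyk hbet <;>
            simp only [Bool.not_true, Bool.not_false, Wallspace.side] at hyk hbet <;>
            exact ⟨by assumption, by assumption⟩
        · right
          have hx' : x ∈ W.side k (!(f k).2.2) := ((mem_or k ((f k).2.2) x).resolve_left hk)
          show (x ∈ W.U k \ W.V k ∧ _ ∈ W.V k \ W.U k) ∨
            (x ∈ W.V k \ W.U k ∧ _ ∈ W.U k \ W.V k)
          rcases Bool.eq_false_or_eq_true ((f k).2.2) with hc | hc <;>
            rw [hc] at hyk hbet hx' hk <;>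
            simp only [Bool.not_true, Bool.not_false, Wallspace.side] at hyk hbet hx' hk <;>
            first
              | exact Or.inl ⟨⟨hx', hk⟩, hyk, hbet⟩
              | exact Or.inr ⟨⟨hx', hk⟩, hyk, hbet⟩
  refine ⟨σ, hσgood, ?_⟩
  -- uniqueness
  intro σ' hσ' j hj
  by_contra hne'
  obtain ⟨i, hi, hnt⟩ := hmax j hj
  apply hnt
  have hji : j ≠ i := fun h => hj (h ▸ hi)
  have hσ'j : σ' j = !(σ j) := (hcases (σ' j) (σ j)).resolve_left hne'
  have hall : ∀ bj bi : Bool, (W.side j bj ∩ W.side i bi).Nonempty := by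
    intro bj bi
    rcases hcases bj (σ j) with h | h
    · have hc := hσgood (fun k => if k ∈ I then bi else σ k) (fun k hk => by simp [hk])
      have hc1 := hc.1 j i
      simp only [if_neg hj, if_pos hi] at hc1
      rwa [h]
    · have hc := hσ' (fun k => if k ∈ I then bi else σ' k) (fun k hk => by simp [hk])
      have hc1 := hc.1 j i
      simp only [if_neg hj, if_pos hi] at hc1
      rw [h, ← hσ'j]
      exact hc1
  exact ⟨hji, hall true true, hall true false, hall false true, hall false false⟩
end

section
/- (Convexity of the subcomplex dual to a hemiwallspace) Let (X, W) be a wallspace. Let D be a set of wall indices together with a fixed orientation σ₀ assigning to each i ∈ D one of the ordered pairs (U i, V i) or (V i, U i) (a hemiwallspace); say a 0-cube c lies in C(𝒰) if c(i) = σ₀(i) for all i ∈ D. Let b₀, b₁, …, b_n be a combinatorial geodesic of 0-cubes (consecutive 0-cubes are adjacent, and no such path from b₀ to b_n has length less than n). Then for every k and every wall index i, b_k(i) = b₀(i) or b_k(i) = b_n(i). Consequently, if b₀ and b_n lie in C(𝒰) then every b_k lies in C(𝒰): C(𝒰) is convex in the dual cube complex. -/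
open Pointwise

private lemma hemi_bool_flip {x y : Bool} (h : x ≠ y) : y = !x := by
  cases x <;> cases y <;> simp_all

private lemma hemi_noflip_eq {ι : Type*} (b : ℕ → ι → Bool) (q : ι) :
    ∀ (s j : ℕ), s ≤ j → (∀ w, s ≤ w → w < j → b w q = b (w+1) q) → b s q = b j q := by
  intro s j
  induction j with
  | zero =>
    intro h _
    obtain rfl := Nat.le_zero.mp h
    rfl
  | succ j ih =>
    intro h hno
    rcases Nat.lt_or_ge s (j+1) with h' | h'
    · have hs : s ≤ j := by omega
      rw [ih hs (fun w hw1 hw2 => hno w hw1 (by omega))]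
      exact hno j (by omega) (by omega)
    · obtain rfl : s = j + 1 := by omega
      rfl

private lemma hemi_exists_flip {ι : Type*} (b : ℕ → ι → Bool) (q : ι) {s j : ℕ}
    (hsj : s ≤ j) (h : b s q ≠ b j q) :
    ∃ w, s ≤ w ∧ w < j ∧ b w q ≠ b (w+1) q := by
  by_contra hc
  push_neg at hc
  exact h (hemi_noflip_eq b q s j hsj fun w h1 h2 => hc w h1 h2)

/-- **Convexity of the subcomplex dual to a hemiwallspace.**  Let `b 0, b 1, …, b n` be a
combinatorial geodesic of `0`-cubes of the dual cube complex (consecutive `0`-cubes are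
adjacent and no path of `0`-cubes from `b 0` to `b n` is shorter).  Then every `0`-cube on
the geodesic orients each wall as `b 0` does or as `b n` does.  Consequently, if `D` is a
set of wall indices with a fixed orientation `σ₀` (a hemiwallspace) and both endpoints lie
in the dual subcomplex `C(𝒰)` (agree with `σ₀` on `D`), then so does every `b k`:
`C(𝒰)` is convex. -/
theorem hemiwallspace_subcomplex_convex
    {X ι : Type*} (W : Wallspace X ι)
    (n : ℕ) (b : ℕ → ι → Bool)
    (hcube : ∀ k ≤ n, W.IsZeroCube (b k))
    (hadj : ∀ k < n, ∃! i : ι, b k i ≠ b (k + 1) i)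
    (hgeo : ∀ (m : ℕ) (b' : ℕ → ι → Bool),
      b' 0 = b 0 → b' m = b n →
      (∀ k ≤ m, W.IsZeroCube (b' k)) →
      (∀ k < m, ∃! i : ι, b' k i ≠ b' (k + 1) i) → n ≤ m) :
    (∀ k ≤ n, ∀ i : ι, b k i = b 0 i ∨ b k i = b n i) ∧
    ∀ (D : Set ι) (σ₀ : ι → Bool),
      (∀ i ∈ D, b 0 i = σ₀ i) → (∀ i ∈ D, b n i = σ₀ i) →
      ∀ k ≤ n, ∀ i ∈ D, b k i = σ₀ i := by
  classical
  have key : ∀ (u v : ℕ) (i : ι), u < v → v < n →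
      b u i ≠ b (u+1) i → b v i ≠ b (v+1) i → False := by
    intro u₀ v₀ i₀ huv₀ hvn₀ h3 h4
    have hex : ∃ d : ℕ, ∃ u v : ℕ, ∃ i : ι, 0 < d ∧ v = u + d ∧ v < n ∧
        b u i ≠ b (u+1) i ∧ b v i ≠ b (v+1) i :=
      ⟨v₀ - u₀, u₀, v₀, i₀, by omega, by omega, hvn₀, h3, h4⟩
    obtain ⟨u, v, i, hd0, hdv, hvn, hufl, hvfl⟩ := Nat.find_spec hex
    have huv : u < v := by omega
    have hn2 : 2 ≤ n := by omega
    -- no flip of wall i strictly between u and v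
    have hflip_i : ∀ w, u < w → w < v → b w i = b (w+1) i := by
      intro w hw1 hw2
      by_contra hne
      exact Nat.find_min hex (show w - u < Nat.find hex by omega)
        ⟨u, w, i, by omega, by omega, by omega, hufl, hne⟩
    -- the interval claim for walls other than i
    have hA : ∀ j q, u < j → j ≤ v → q ≠ i → b j q = b u q ∨ b j q = b (v+1) q := by
      intro j q hj1 hj2 hqi
      by_contra hcon
      push_neg at hcon
      obtain ⟨h1, h2⟩ := hcon
      obtain ⟨w, hw1, hw2, hwfl⟩ :=
        hemi_exists_flip b q (show u ≤ j by omega) (fun h => h1 h.symm)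
      have hwu : w ≠ u := by
        intro h
        subst h
        obtain ⟨r, hr, hru⟩ := hadj w (by omega)
        exact hqi ((hru q hwfl).trans (hru i hufl).symm)
      obtain ⟨w', hw1', hw2', hwfl'⟩ :=
        hemi_exists_flip b q (show j ≤ v + 1 by omega) h2
      have hwv : w' ≠ v := by
        intro h
        subst h
        obtain ⟨r, hr, hru⟩ := hadj w' (by omega)
        exact hqi ((hru q hwfl').trans (hru i hvfl).symm)
      exact Nat.find_min hex (show w' - w < Nat.find hex by omega)
        ⟨w, w', q, by omega, by omega, by omega, hwfl, hwfl'⟩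
    have hmid : ∀ j, u < j → j ≤ v → b j i = !(b u i) := by
      intro j hj1 hj2
      have h : b (u+1) i = b j i :=
        hemi_noflip_eq b i (u+1) j (by omega)
          (fun w h1 h2 => hflip_i w (by omega) (by omega))
      exact h.symm.trans (hemi_bool_flip hufl)
    have hbvi : b (v+1) i = b u i := by
      rw [hemi_bool_flip hvfl, hmid v huv le_rfl, Bool.not_not]
    -- the reversed cubes
    set c : ℕ → ι → Bool := fun j q => if q = i then b u i else b j q with hc
    have hci : ∀ j, c j i = b u i := by
      intro j
      simp only [hc, if_pos rfl]
    have hcq : ∀ j q, q ≠ i → c j q = b j q := by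
      intro j q hq
      simp only [hc, if_neg hq]
    have hcubes : ∀ j, u < j → j ≤ v → W.IsZeroCube (c j) := by
      intro j hj1 hj2
      have hjn : j ≤ n := by omega
      constructor
      · intro p q
        by_cases hp : p = i <;> by_cases hq : q = i
        · rw [hp, hq, hci]
          exact (hcube u (by omega)).1 i i
        · rw [hp, hci, hcq j q hq]
          rcases hA j q hj1 hj2 hq with h | h
          · rw [h]
            exact (hcube u (by omega)).1 i q
          · rw [h, ← hbvi]
            exact (hcube (v+1) (by omega)).1 i q
        · rw [hq, hci, hcq j p hp]
          rcases hA j p hj1 hj2 hp with h | h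
          · rw [h]
            exact (hcube u (by omega)).1 p i
          · rw [h, ← hbvi]
            exact (hcube (v+1) (by omega)).1 p i
        · rw [hcq j p hp, hcq j q hq]
          exact (hcube j hjn).1 p q
      · intro x
        apply Set.Finite.subset (((hcube j hjn).2 x).insert i)
        intro q hq
        by_cases h' : q = i
        · exact Set.mem_insert_iff.mpr (Or.inl h')
        · rw [Set.mem_setOf_eq, hcq j q h'] at hq
          exact Set.mem_insert_of_mem _ hq
    have hcadj : ∀ w, u < w → w < v → ∃! q, c w q ≠ c (w+1) q := by
      intro w hw1 hw2
      obtain ⟨q₀, hq₀, huniq⟩ := hadj w (by omega)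
      have hq₀i : q₀ ≠ i := by
        intro h
        subst h
        exact hq₀ (hflip_i w hw1 hw2)
      refine ⟨q₀, ?_, ?_⟩
      · show c w q₀ ≠ c (w+1) q₀
        rw [hcq w q₀ hq₀i, hcq (w+1) q₀ hq₀i]
        exact hq₀
      · intro q hq
        by_cases h' : q = i
        · rw [h', hci w, hci (w+1)] at hq
          exact absurd rfl hq
        · rw [hcq w q h', hcq (w+1) q h'] at hq
          exact huniq q hq
    have hcu' : c (u+1) = b u := by
      funext q
      by_cases h' : q = i
      · rw [h']
        exact hci (u+1)
      · rw [hcq (u+1) q h']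
        by_contra hne
        obtain ⟨r, hr, hru⟩ := hadj u (by omega)
        exact h' ((hru q (fun h => hne h.symm)).trans (hru i hufl).symm)
    have hcv' : c v = b (v+1) := by
      funext q
      by_cases h' : q = i
      · rw [h', hci v, hbvi]
      · rw [hcq v q h']
        by_contra hne
        obtain ⟨r, hr, hru⟩ := hadj v (by omega)
        exact h' ((hru q hne).trans (hru i hvfl).symm)
    -- the shortened path
    set b' : ℕ → ι → Bool :=
      fun p => if p ≤ u then b p else if p ≤ v - 1 then c (p+1) else b (p+2) with hb'
    have hb'1 : ∀ p, p ≤ u → b' p = b p := by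
      intro p hp
      simp only [hb', if_pos hp]
    have hb'2 : ∀ p, u < p → p ≤ v - 1 → b' p = c (p+1) := by
      intro p hp1 hp2
      simp only [hb', if_neg (by omega : ¬ p ≤ u), if_pos hp2]
    have hb'3 : ∀ p, v - 1 < p → b' p = b (p+2) := by
      intro p hp
      simp only [hb', if_neg (by omega : ¬ p ≤ u), if_neg (by omega : ¬ p ≤ v - 1)]
    have h0' : b' 0 = b 0 := hb'1 0 (Nat.zero_le u)
    have hend : b' (n-2) = b n := by
      rcases Nat.lt_or_ge (v-1) (n-2) with h | h
      · rw [hb'3 _ h, show n - 2 + 2 = n by omega]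
      · have hv : v = n - 1 := by omega
        rcases Nat.lt_or_ge u (n-2) with h2 | h2
        · rw [hb'2 _ (by omega) (by omega), show n - 2 + 1 = v by omega, hcv',
            show v + 1 = n by omega]
        · have h3 : u = n - 2 := by omega
          have hb : b u = b (v+1) := by
            rw [← hcu', show u + 1 = v by omega, hcv']
          rw [hb'1 _ (by omega), show n - 2 = u from h3.symm, hb,
            show v + 1 = n by omega]
    have hcubes' : ∀ k ≤ n - 2, W.IsZeroCube (b' k) := by
      intro p hp
      rcases le_or_gt p u with h | h
      · rw [hb'1 p h]
        exact hcube p (by omega)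
      · rcases le_or_gt p (v-1) with h2 | h2
        · rw [hb'2 p h h2]
          exact hcubes (p+1) (by omega) (by omega)
        · rw [hb'3 p h2]
          exact hcube (p+2) (by omega)
    have hadj' : ∀ k < n - 2, ∃! q : ι, b' k q ≠ b' (k + 1) q := by
      intro p hp
      rcases le_or_gt (p+1) u with h1 | h1
      · rw [hb'1 p (by omega), hb'1 (p+1) h1]
        exact hadj p (by omega)
      · rcases le_or_gt p u with h2 | h2
        · have hpu : p = u := by omega
          subst hpu
          rw [hb'1 p le_rfl, ← hcu']
          rcases le_or_gt (p+1) (v-1) with h3 | h3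
          · rw [hb'2 (p+1) (by omega) h3]
            exact hcadj (p+1) (by omega) (by omega)
          · have hv : v = p + 1 := by omega
            rw [hb'3 (p+1) (by omega), show p + 1 = v from hv.symm, hcv',
              show v + 2 = v + 1 + 1 by omega]
            exact hadj (v+1) (by omega)
        · rcases le_or_gt (p+1) (v-1) with h3 | h3
          · rw [hb'2 p h2 (by omega), hb'2 (p+1) (by omega) h3]
            exact hcadj (p+1) (by omega) (by omega)
          · rcases le_or_gt p (v-1) with h4 | h4
            · have hpv : p = v - 1 := by omega
              rw [hb'2 p h2 h4, hb'3 (p+1) (by omega), show p + 1 = v by omega, hcv',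
                show v + 2 = v + 1 + 1 by omega]
              exact hadj (v+1) (by omega)
            · rw [hb'3 p h4, hb'3 (p+1) (by omega),
                show p + 1 + 2 = p + 2 + 1 by omega]
              exact hadj (p+2) (by omega)
    have := hgeo (n-2) b' h0' hend hcubes' hadj'
    omega
  have part1 : ∀ k ≤ n, ∀ i : ι, b k i = b 0 i ∨ b k i = b n i := by
    intro k hk i
    by_contra hcon
    push_neg at hcon
    obtain ⟨h0, hn'⟩ := hcon
    obtain ⟨w, hw1, hw2, hwfl⟩ :=
      hemi_exists_flip b i (Nat.zero_le k) (fun h => h0 h.symm)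
    obtain ⟨w', hw1', hw2', hwfl'⟩ := hemi_exists_flip b i hk hn'
    exact key w w' i (by omega) (by omega) hwfl hwfl'
  refine ⟨part1, fun D σ₀ h0 hn' k hk i hi => ?_⟩
  rcases part1 k hk i with h | h
  · rw [h, h0 i hi]
  · rw [h, hn' i hi]
end

section
/- (Transverse walls meet, geometrically) Let X be a connected and locally connected topological space. Let W and W' be closed connected subsets of X such that X − W has exactly two connected components U and V, and X − W' has exactly two connected components U' and V'. Then W ∩ W' ≠ ∅ if and only if the associated walls are transverse, i.e., all four intersections (W ∪ U) ∩ (W' ∪ U'), (W ∪ U) ∩ (W' ∪ V'), (W ∪ V) ∩ (W' ∪ U'), and (W ∪ V) ∩ (W' ∪ V') are nonempty. -/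
open Set

private lemma walls_aux {X : Type*} [TopologicalSpace X] [ConnectedSpace X]
    [LocallyConnectedSpace X]
    (Wl Wr : Set X) (hWl : IsClosed Wl) (hWr : IsClosed Wr)
    (hWlne : Wl.Nonempty)
    (U V : Set X) (hUV : U ≠ V)
    (hU : ∃ u ∈ Wlᶜ, U = connectedComponentIn Wlᶜ u)
    (hV : ∃ v ∈ Wlᶜ, V = connectedComponentIn Wlᶜ v)
    (hcompl : ∀ x ∈ Wlᶜ, connectedComponentIn Wlᶜ x = U ∨ connectedComponentIn Wlᶜ x = V)
    (U' V' : Set X) (hUV' : U' ≠ V')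
    (hU' : ∃ u ∈ Wrᶜ, U' = connectedComponentIn Wrᶜ u)
    (hV' : ∃ v ∈ Wrᶜ, V' = connectedComponentIn Wrᶜ v)
    (hdisj : Wl ∩ Wr = ∅) (hWlU' : Wl ⊆ U') (hWrU : Wr ⊆ U)
    (hne : ((Wl ∪ V) ∩ (Wr ∪ V')).Nonempty) : False := by
  obtain ⟨u, hu, hUeq⟩ := hU
  obtain ⟨v, hv, hVeq⟩ := hV
  obtain ⟨u', hu', hUeq'⟩ := hU'
  obtain ⟨v', hv', hVeq'⟩ := hV'
  -- disjointness of distinct components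
  have hUVd : ∀ z : X, z ∈ U → z ∈ V → False := by
    intro z hzU hzV
    exact hUV ((hUeq.trans (connectedComponentIn_eq (hUeq ▸ hzU))).trans
      (hVeq.trans (connectedComponentIn_eq (hVeq ▸ hzV))).symm)
  have hUVd' : ∀ z : X, z ∈ U' → z ∈ V' → False := by
    intro z hzU hzV
    exact hUV' ((hUeq'.trans (connectedComponentIn_eq (hUeq' ▸ hzU))).trans
      (hVeq'.trans (connectedComponentIn_eq (hVeq' ▸ hzV))).symm)
  have hdisjmem : ∀ z : X, z ∈ Wl → z ∈ Wr → False := by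
    intro z h1 h2
    have : z ∈ Wl ∩ Wr := ⟨h1, h2⟩
    rw [hdisj] at this
    exact this
  -- the witness lies in V ∩ V'
  obtain ⟨x, hx1, hx2⟩ := hne
  have hxV : x ∈ V := by
    rcases hx1 with hx1 | hx1
    · exfalso
      rcases hx2 with hx2 | hx2
      · exact hdisjmem x hx1 hx2
      · exact hUVd' x (hWlU' hx1) hx2
    · exact hx1
  have hxV' : x ∈ V' := by
    rcases hx2 with hx2 | hx2
    · exact absurd (hUVd x (hWrU hx2) hxV) not_false
    · exact hx2
  -- basic facts about V and V'
  have hVsub : V ⊆ Wlᶜ := hVeq ▸ connectedComponentIn_subset _ _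
  have hVsub' : V' ⊆ Wrᶜ := hVeq' ▸ connectedComponentIn_subset _ _
  have hVopen : IsOpen V := hVeq ▸ hWl.isOpen_compl.connectedComponentIn
  have hUopen : IsOpen U := hUeq ▸ hWl.isOpen_compl.connectedComponentIn
  have hUopen' : IsOpen U' := hUeq' ▸ hWr.isOpen_compl.connectedComponentIn
  have hVpc : IsPreconnected V := hVeq ▸ isPreconnected_connectedComponentIn
  have hVpc' : IsPreconnected V' := hVeq' ▸ isPreconnected_connectedComponentIn
  -- V = V'
  have hVWr : V ⊆ Wrᶜ := fun z hz hzW => hUVd z (hWrU hzW) hz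
  have hVWl' : V' ⊆ Wlᶜ := fun z hz hzW => hUVd' z (hWlU' hzW) hz
  have hVV'1 : V ⊆ V' := by
    have h1 : V ⊆ connectedComponentIn Wrᶜ x :=
      hVpc.subset_connectedComponentIn hxV hVWr
    have h2 : connectedComponentIn Wrᶜ x = V' := by
      rw [hVeq'] at hxV' ⊢
      exact (connectedComponentIn_eq hxV').symm
    rwa [h2] at h1
  have hVV'2 : V' ⊆ V := by
    have h1 : V' ⊆ connectedComponentIn Wlᶜ x :=
      hVpc'.subset_connectedComponentIn hxV' hVWl'
    have h2 : connectedComponentIn Wlᶜ x = V := by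
      rw [hVeq] at hxV ⊢
      exact (connectedComponentIn_eq hxV).symm
    rwa [h2] at h1
  have hVV' : V = V' := hVV'1.antisymm hVV'2
  -- closure V ⊆ V, so V is clopen
  have hclUV : Disjoint U (closure V) :=
    (Set.disjoint_left.mpr fun z hzU hzV => hUVd z hzU hzV).closure_right hUopen
  have hclUV' : Disjoint U' (closure V') :=
    (Set.disjoint_left.mpr fun z hzU hzV => hUVd' z hzU hzV).closure_right hUopen'
  have hVclosed : IsClosed V := by
    rw [← closure_subset_iff_isClosed]
    intro z hz
    by_cases hzWl : z ∈ Wl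
    · exact absurd hz (Set.disjoint_left.mp hclUV' (hWlU' hzWl) ∘ (hVV' ▸ ·))
    · rcases hcompl z hzWl with h | h
      · exact absurd hz (Set.disjoint_left.mp hclUV (h ▸ mem_connectedComponentIn hzWl))
      · exact h ▸ mem_connectedComponentIn hzWl
  -- contradiction with connectedness of X
  have := (isClopen_iff.mp ⟨hVclosed, hVopen⟩)
  rcases this with h | h
  · exact (h ▸ hxV : x ∈ (∅ : Set X))
  · obtain ⟨w, hw⟩ := hWlne
    exact hVsub (h ▸ Set.mem_univ w) hw

/-- **Transverse walls meet, geometrically.**  Let `X` be a connected, locally connected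
topological space, and let `Wl`, `Wr` be closed connected subsets such that `X − Wl` has
exactly two connected components `U`, `V` and `X − Wr` has exactly two connected components
`U'`, `V'`.  Then `Wl ∩ Wr ≠ ∅` if and only if the associated walls are transverse, i.e.
all four intersections of closed halfspaces are nonempty. -/
theorem geometric_walls_meet_iff_transverse
    {X : Type*} [TopologicalSpace X] [ConnectedSpace X] [LocallyConnectedSpace X]
    (Wl Wr : Set X)
    (hWl : IsClosed Wl) (hWlc : IsConnected Wl)
    (hWr : IsClosed Wr) (hWrc : IsConnected Wr)
    (U V : Set X) (hUV : U ≠ V)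
    (hU : ∃ u ∈ Wlᶜ, U = connectedComponentIn Wlᶜ u)
    (hV : ∃ v ∈ Wlᶜ, V = connectedComponentIn Wlᶜ v)
    (hcompl : ∀ x ∈ Wlᶜ, connectedComponentIn Wlᶜ x = U ∨ connectedComponentIn Wlᶜ x = V)
    (U' V' : Set X) (hUV' : U' ≠ V')
    (hU' : ∃ u ∈ Wrᶜ, U' = connectedComponentIn Wrᶜ u)
    (hV' : ∃ v ∈ Wrᶜ, V' = connectedComponentIn Wrᶜ v)
    (hcompl' : ∀ x ∈ Wrᶜ, connectedComponentIn Wrᶜ x = U' ∨ connectedComponentIn Wrᶜ x = V') :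
    (Wl ∩ Wr).Nonempty ↔
      (((Wl ∪ U) ∩ (Wr ∪ U')).Nonempty ∧ ((Wl ∪ U) ∩ (Wr ∪ V')).Nonempty ∧
       ((Wl ∪ V) ∩ (Wr ∪ U')).Nonempty ∧ ((Wl ∪ V) ∩ (Wr ∪ V')).Nonempty) := by
  constructor
  · rintro ⟨x, hx1, hx2⟩
    exact ⟨⟨x, Or.inl hx1, Or.inl hx2⟩, ⟨x, Or.inl hx1, Or.inl hx2⟩,
      ⟨x, Or.inl hx1, Or.inl hx2⟩, ⟨x, Or.inl hx1, Or.inl hx2⟩⟩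
  · rintro ⟨h1, h2, h3, h4⟩
    by_contra hdisj
    rw [Set.not_nonempty_iff_eq_empty] at hdisj
    -- Wl lies in one component of Wrᶜ, Wr in one component of Wlᶜ
    obtain ⟨w, hw⟩ := hWlc.nonempty
    obtain ⟨w', hw'⟩ := hWrc.nonempty
    have hWlWr : Wl ⊆ Wrᶜ := fun z hz hz' =>
      (hdisj ▸ (⟨hz, hz'⟩ : z ∈ Wl ∩ Wr) : z ∈ (∅ : Set X))
    have hWrWl : Wr ⊆ Wlᶜ := fun z hz hz' =>
      (hdisj ▸ (⟨hz', hz⟩ : z ∈ Wl ∩ Wr) : z ∈ (∅ : Set X))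
    have hWlsub : Wl ⊆ connectedComponentIn Wrᶜ w :=
      hWlc.isPreconnected.subset_connectedComponentIn hw hWlWr
    have hWrsub : Wr ⊆ connectedComponentIn Wlᶜ w' :=
      hWrc.isPreconnected.subset_connectedComponentIn hw' hWrWl
    rcases hcompl' w (hWlWr hw) with hl | hl <;>
      rcases hcompl w' (hWrWl hw') with hr | hr
    · exact walls_aux Wl Wr hWl hWr hWlc.nonempty U V hUV hU hV hcompl U' V' hUV'
        hU' hV' hdisj (hl ▸ hWlsub) (hr ▸ hWrsub) h4
    · exact walls_aux Wl Wr hWl hWr hWlc.nonempty V U hUV.symm hV hU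
        (fun x hx => (hcompl x hx).symm) U' V' hUV' hU' hV' hdisj
        (hl ▸ hWlsub) (hr ▸ hWrsub) h2
    · exact walls_aux Wl Wr hWl hWr hWlc.nonempty U V hUV hU hV hcompl V' U' hUV'.symm
        hV' hU' hdisj (hl ▸ hWlsub) (hr ▸ hWrsub) h3
    · exact walls_aux Wl Wr hWl hWr hWlc.nonempty V U hUV.symm hV hU
        (fun x hx => (hcompl x hx).symm) V' U' hUV'.symm hV' hU' hdisj
        (hl ▸ hWlsub) (hr ▸ hWrsub) h1
end
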